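/- arXiv:0903.2555 — 4 statements merged into one kernel-verified Lean document; each statement's English description precedes it below -/
import Mathlib

section
/- For all subsets X, Y of the positive integers and all integers n ≥ 1 and 0 ≤ k ≤ n, the number of permutations σ of [n] with exactly k (X,Y)-place-value pairs is V_{n,k}^{X,Y} = k! · (x_n − k)! · (x_n^c)! · C(x_n, k) · C(y_n, k) · C(y_n^c, x_n − k), where C(a,b) denotes the binomial coefficient (interpreted as 0 when b > a or b < 0). -/
open Finset Function Equiv

section Aux
variable {α : Type*} [Fintype α] [DecidableEq α]

lemma filter_subtype_card (A : Finset α) (q : α → Prop) [DecidablePred q] :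
    (univ.filter (fun a : {a // a ∈ A} => q a.1)).card
      = (univ.filter (fun i => i ∈ A ∧ q i)).card := by
  apply Finset.card_bij (fun a _ => a.1)
  · intro a ha
    simp only [mem_filter, mem_univ, true_and] at ha ⊢
    exact ⟨a.2, ha⟩
  · intro a _ b _ h; exact Subtype.ext h
  · intro b hb
    simp only [mem_filter, mem_univ, true_and] at hb
    exact ⟨⟨b, hb.1⟩, by simp [hb.2], rfl⟩

lemma exists_perm_extend (A : Finset α) (g : {a // a ∈ A} → α) (hg : Injective g) :
    ∃ σ : Equiv.Perm α, ∀ a : {a // a ∈ A}, σ a = g a := by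
  classical
  set R : Finset α := univ.image g with hR
  have hRcard : R.card = A.card := by
    rw [hR, Finset.card_image_of_injective _ hg, Finset.card_univ, Fintype.card_coe]
  have hcard : Fintype.card {x // x ∉ A} = Fintype.card {y // y ∉ R} := by
    rw [Fintype.card_subtype_compl, Fintype.card_subtype_compl]
    simp [Fintype.card_coe, hRcard]
  let e : {x // x ∉ A} ≃ {y // y ∉ R} := Fintype.equivOfCardEq hcard
  let f : α → α := fun x => if h : x ∈ A then g ⟨x, h⟩ else (e ⟨x, h⟩ : α)
  have hinj : Injective f := by
    intro a b hab
    by_cases ha : a ∈ A <;> by_cases hb : b ∈ A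
    · have := hg (show g ⟨a, ha⟩ = g ⟨b, hb⟩ by simpa [f, ha, hb] using hab)
      exact congrArg Subtype.val this
    · exfalso
      have h1 : f a ∈ R := by simp [f, ha, hR]
      have h2 : f b ∉ R := by simpa [f, hb] using (e ⟨b, hb⟩).2
      rw [hab] at h1; exact h2 h1
    · exfalso
      have h1 : f b ∈ R := by simp [f, hb, hR]
      have h2 : f a ∉ R := by simpa [f, ha] using (e ⟨a, ha⟩).2
      rw [hab] at h2; exact h2 h1
    · have : (e ⟨a, ha⟩ : α) = (e ⟨b, hb⟩ : α) := by simpa [f, ha, hb] using hab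
      have := e.injective (Subtype.ext this)
      exact congrArg Subtype.val this
  have hbij : Bijective f := Finite.injective_iff_bijective.mp hinj
  refine ⟨Equiv.ofBijective f hbij, ?_⟩
  intro a
  show f a.1 = g a
  simp [f, a.2]

lemma card_extend (A : Finset α) (g : {a // a ∈ A} → α) (σ0 : Equiv.Perm α)
    (h0 : ∀ a : {a // a ∈ A}, σ0 a = g a) :
    Nat.card {σ : Equiv.Perm α // ∀ a : {a // a ∈ A}, σ a = g a}
      = Nat.factorial (Fintype.card α - A.card) := by
  classical
  have e1 : {σ : Equiv.Perm α // ∀ a : {a // a ∈ A}, σ a = g a}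
      ≃ {τ : Equiv.Perm α // ∀ x, ¬ (x ∉ A) → τ x = x} := by
    refine ⟨fun σ => ⟨σ0⁻¹ * σ.1, ?_⟩, fun τ => ⟨σ0 * τ.1, ?_⟩, ?_, ?_⟩
    · intro x hx
      have hxA : x ∈ A := not_not.mp hx
      have : σ.1 x = σ0 x := by rw [σ.2 ⟨x, hxA⟩, h0 ⟨x, hxA⟩]
      simp [Equiv.Perm.mul_apply, this]
    · intro a
      have : τ.1 a.1 = a.1 := τ.2 a.1 (not_not_intro a.2)
      simp [Equiv.Perm.mul_apply, this, h0 a]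
    · intro σ; ext x; simp
    · intro τ; ext x; simp
  rw [Nat.card_congr e1,
    Nat.card_congr (Equiv.Perm.subtypeEquivSubtypePerm (fun x => x ∉ A)).symm,
    Nat.card_eq_fintype_card, Fintype.card_perm, Fintype.card_subtype_compl,
    Fintype.card_coe]

lemma card_inj_fiber (A B : Finset α) (T : Finset {a // a ∈ A}) :
    Nat.card {g : {a // a ∈ A} → α // Injective g ∧ ∀ a, (g a ∈ B ↔ a ∈ T)}
      = B.card.descFactorial T.card *
        (Fintype.card α - B.card).descFactorial (A.card - T.card) := by
  classical
  have e : {g : {a // a ∈ A} → α // Injective g ∧ ∀ a, (g a ∈ B ↔ a ∈ T)}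
      ≃ ({a : {a // a ∈ A} // a ∈ T} ↪ {b // b ∈ B}) ×
        ({a : {a // a ∈ A} // a ∉ T} ↪ {b // b ∉ B}) := by
    refine ⟨fun g => ⟨⟨fun t => ⟨g.1 t.1, (g.2.2 t.1).2 t.2⟩, ?_⟩,
        ⟨fun t => ⟨g.1 t.1, fun hb => t.2 ((g.2.2 t.1).1 hb)⟩, ?_⟩⟩,
      fun p => ⟨fun a => if h : a ∈ T then (p.1 ⟨a, h⟩ : α) else (p.2 ⟨a, h⟩ : α),
        ?_, ?_⟩, ?_, ?_⟩
    · intro s t hst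
      exact Subtype.ext (g.2.1 (congrArg Subtype.val hst))
    · intro s t hst
      exact Subtype.ext (g.2.1 (congrArg Subtype.val hst))
    · intro a b hab
      by_cases ha : a ∈ T <;> by_cases hb : b ∈ T
      · have : p.1 ⟨a, ha⟩ = p.1 ⟨b, hb⟩ := Subtype.ext (by simpa [ha, hb] using hab)
        exact congrArg Subtype.val (p.1.injective this)
      · exfalso
        have h1 : ((p.1 ⟨a, ha⟩ : {b // b ∈ B}) : α) ∈ B := (p.1 ⟨a, ha⟩).2
        have h2 : ((p.2 ⟨b, hb⟩ : {b // b ∉ B}) : α) ∉ B := (p.2 ⟨b, hb⟩).2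
        simp only [dif_pos ha, dif_neg hb] at hab
        rw [hab] at h1; exact h2 h1
      · exfalso
        have h1 : ((p.1 ⟨b, hb⟩ : {b // b ∈ B}) : α) ∈ B := (p.1 ⟨b, hb⟩).2
        have h2 : ((p.2 ⟨a, ha⟩ : {b // b ∉ B}) : α) ∉ B := (p.2 ⟨a, ha⟩).2
        simp only [dif_neg ha, dif_pos hb] at hab
        rw [← hab] at h1; exact h2 h1
      · have : p.2 ⟨a, ha⟩ = p.2 ⟨b, hb⟩ := Subtype.ext (by simpa [ha, hb] using hab)
        exact congrArg Subtype.val (p.2.injective this)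
    · intro a
      by_cases h : a ∈ T
      · simp only [dif_pos h]
        exact ⟨fun _ => h, fun _ => (p.1 ⟨a, h⟩).2⟩
      · simp only [dif_neg h]
        exact ⟨fun hb => absurd hb (p.2 ⟨a, h⟩).2, fun ht => absurd ht h⟩
    · intro g
      apply Subtype.ext
      funext a
      by_cases h : a ∈ T <;> simp [h] <;> rfl
    · intro p
      refine Prod.ext ?_ ?_
      · apply DFunLike.ext
        intro t
        apply Subtype.ext
        simp [t.2]
      · apply DFunLike.ext
        intro t
        apply Subtype.ext
        simp [t.2]
  rw [Nat.card_congr e, Nat.card_eq_fintype_card, Fintype.card_prod,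
    Fintype.card_embedding_eq, Fintype.card_embedding_eq]
  congr 1
  · simp [Fintype.card_coe]
  · rw [Fintype.card_subtype_compl, Fintype.card_subtype_compl]
    simp [Fintype.card_coe]

end Aux

section Main
variable {α : Type*} [Fintype α] [DecidableEq α]

lemma card_inj_filter (A B : Finset α) (k : ℕ) :
    (univ.filter (fun g : {a // a ∈ A} → α =>
        Injective g ∧ (univ.filter (fun a => g a ∈ B)).card = k)).card
      = A.card.choose k *
        (B.card.descFactorial k *
          ((Fintype.card α - B.card).descFactorial (A.card - k))) := by
  classical
  rw [Finset.card_eq_sum_card_fiberwise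
    (f := fun g : {a // a ∈ A} → α => univ.filter (fun a => g a ∈ B))
    (t := Finset.powersetCard k (univ : Finset {a // a ∈ A}))
    (fun g hg => by
      simp only [Finset.mem_coe, mem_filter, mem_univ, true_and] at hg
      exact Finset.mem_powersetCard.mpr ⟨Finset.subset_univ _, hg.2⟩)]
  have hconst : ∀ T ∈ Finset.powersetCard k (univ : Finset {a // a ∈ A}),
      ((univ.filter (fun g : {a // a ∈ A} → α =>
          Injective g ∧ (univ.filter (fun a => g a ∈ B)).card = k)).filter
        (fun g => univ.filter (fun a => g a ∈ B) = T)).card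
      = B.card.descFactorial k *
          ((Fintype.card α - B.card).descFactorial (A.card - k)) := by
    intro T hT
    have hTk : T.card = k := (Finset.mem_powersetCard.mp hT).2
    have heq : ((univ.filter (fun g : {a // a ∈ A} → α =>
          Injective g ∧ (univ.filter (fun a => g a ∈ B)).card = k)).filter
        (fun g => univ.filter (fun a => g a ∈ B) = T))
        = univ.filter (fun g : {a // a ∈ A} → α =>
            Injective g ∧ ∀ a, (g a ∈ B ↔ a ∈ T)) := by
      ext g
      simp only [mem_filter, mem_univ, true_and]
      constructor
      · rintro ⟨⟨hinj, -⟩, hfT⟩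
        refine ⟨hinj, fun a => ?_⟩
        rw [← hfT]; simp
      · rintro ⟨hinj, hiff⟩
        have hfT : univ.filter (fun a => g a ∈ B) = T := by
          ext a; simp [hiff a]
        exact ⟨⟨hinj, by rw [hfT, hTk]⟩, hfT⟩
    rw [heq, ← Fintype.card_subtype, ← Nat.card_eq_fintype_card,
      card_inj_fiber A B T, hTk]
  rw [Finset.sum_congr rfl hconst, Finset.sum_const, Finset.card_powersetCard,
    Finset.card_univ, Fintype.card_coe, smul_eq_mul]

lemma card_perm_filter (A B : Finset α) (k : ℕ) :
    Nat.card {σ : Equiv.Perm α |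
        (univ.filter (fun i => i ∈ A ∧ σ i ∈ B)).card = k}
      = A.card.choose k *
          (B.card.descFactorial k *
            ((Fintype.card α - B.card).descFactorial (A.card - k))) *
          Nat.factorial (Fintype.card α - A.card) := by
  classical
  have h1 : Nat.card {σ : Equiv.Perm α |
        (univ.filter (fun i => i ∈ A ∧ σ i ∈ B)).card = k}
      = (univ.filter (fun σ : Equiv.Perm α =>
          (univ.filter (fun i => i ∈ A ∧ σ i ∈ B)).card = k)).card := by
    rw [Nat.card_eq_fintype_card]
    exact Fintype.card_subtype _
  rw [h1]
  set G : Finset ({a // a ∈ A} → α) := univ.filter (fun g : {a // a ∈ A} → α =>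
      Injective g ∧ (univ.filter (fun a => g a ∈ B)).card = k) with hG
  rw [Finset.card_eq_sum_card_fiberwise
    (f := fun (σ : Equiv.Perm α) (a : {a // a ∈ A}) => σ a.1)
    (t := G)
    (fun σ hσ => by
      simp only [Finset.mem_coe, mem_filter, mem_univ, true_and] at hσ
      simp only [hG, Finset.mem_coe, mem_filter, mem_univ, true_and]
      refine ⟨σ.injective.comp Subtype.val_injective, ?_⟩
      rw [filter_subtype_card A (fun i => σ i ∈ B), hσ])]
  have hconst : ∀ g ∈ G,
      ((univ.filter (fun σ : Equiv.Perm α =>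
          (univ.filter (fun i => i ∈ A ∧ σ i ∈ B)).card = k)).filter
        (fun σ => (fun a : {a // a ∈ A} => σ a.1) = g)).card
      = Nat.factorial (Fintype.card α - A.card) := by
    intro g hg
    simp only [hG, mem_filter, mem_univ, true_and] at hg
    have himp : ∀ σ : Equiv.Perm α, (fun a : {a // a ∈ A} => σ a.1) = g →
        (univ.filter (fun i => i ∈ A ∧ σ i ∈ B)).card = k := by
      intro σ hσg
      rw [← filter_subtype_card A (fun i => σ i ∈ B)]
      have : (fun a : {a // a ∈ A} => σ a.1 ∈ B) = (fun a => g a ∈ B) := by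
        funext a; rw [congrFun hσg a]
      rw [show (univ.filter (fun a : {a // a ∈ A} => σ a.1 ∈ B))
          = univ.filter (fun a => g a ∈ B) by
        ext a; simp [congrFun hσg a]]
      exact hg.2
    have heq : ((univ.filter (fun σ : Equiv.Perm α =>
          (univ.filter (fun i => i ∈ A ∧ σ i ∈ B)).card = k)).filter
        (fun σ => (fun a : {a // a ∈ A} => σ a.1) = g))
        = univ.filter (fun σ : Equiv.Perm α =>
            ∀ a : {a // a ∈ A}, σ a = g a) := by
      ext σ
      simp only [mem_filter, mem_univ, true_and]
      constructor
      · rintro ⟨-, hσg⟩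
        exact fun a => congrFun hσg a
      · intro hext
        have hσg : (fun a : {a // a ∈ A} => σ a.1) = g := funext hext
        exact ⟨himp σ hσg, hσg⟩
    rw [heq, ← Fintype.card_subtype, ← Nat.card_eq_fintype_card]
    obtain ⟨σ0, hσ0⟩ := exists_perm_extend A g hg.1
    exact card_extend A g σ0 hσ0
  rw [Finset.sum_congr rfl hconst, Finset.sum_const, smul_eq_mul, hG,
    card_inj_filter A B k]

end Main



/-- `cnt X n` is `|X ∩ [n]|` where `[n] = {1, ..., n}`. -/
noncomputable def cnt (X : Set ℕ) (n : ℕ) : ℕ := (X ∩ Set.Icc 1 n).ncard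

/-- `val_{X,Y}(σ)`: number of positions `i ∈ [n]` with `i ∈ X` and `σ_i ∈ Y`
(positions and values of `Fin n` are identified with `{1, ..., n}` via `i ↦ i + 1`). -/
noncomputable def valCount (X Y : Set ℕ) (n : ℕ) (σ : Equiv.Perm (Fin n)) : ℕ :=
  {i : Fin n | ((i : ℕ) + 1) ∈ X ∧ (((σ i : ℕ)) + 1) ∈ Y}.ncard

/-- `V_{n,k}^{X,Y}`: the number of permutations of `[n]` with exactly `k`
`(X,Y)`-place-value pairs. -/
noncomputable def V (X Y : Set ℕ) (n k : ℕ) : ℕ :=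
  Nat.card {σ : Equiv.Perm (Fin n) | valCount X Y n σ = k}

/-- Theorem 1 (Kitaev–Remmel): for all `X, Y ⊆ ℕ₊`, `n ≥ 1`, `0 ≤ k ≤ n`,
`V_{n,k}^{X,Y} = k! (x_n - k)! (x_n^c)! C(x_n, k) C(y_n, k) C(y_n^c, x_n - k)`. -/
theorem V_formula (X Y : Set ℕ) (hX : 0 ∉ X) (hY : 0 ∉ Y) (n k : ℕ)
    (hn : 1 ≤ n) (hk : k ≤ n) :
    V X Y n k =
      k.factorial * (cnt X n - k).factorial * (n - cnt X n).factorial *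
        (cnt X n).choose k * (cnt Y n).choose k *
        (n - cnt Y n).choose (cnt X n - k) := by
  classical
  set A : Finset (Fin n) := univ.filter (fun i : Fin n => ((i : ℕ) + 1) ∈ X) with hA
  set B : Finset (Fin n) := univ.filter (fun i : Fin n => ((i : ℕ) + 1) ∈ Y) with hB
  have hinj : Injective (fun i : Fin n => (i : ℕ) + 1) := by
    intro i j h
    simp only at h
    exact Fin.ext (by omega)
  have hcnt : ∀ (Z : Set ℕ), cnt Z n
      = (univ.filter (fun i : Fin n => ((i : ℕ) + 1) ∈ Z)).card := by
    intro Z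
    have himg : Z ∩ Set.Icc 1 n
        = (fun i : Fin n => (i : ℕ) + 1) '' {i : Fin n | ((i : ℕ) + 1) ∈ Z} := by
      ext m
      simp only [Set.mem_inter_iff, Set.mem_Icc, Set.mem_image, Set.mem_setOf_eq]
      constructor
      · rintro ⟨hmZ, h1, h2⟩
        refine ⟨⟨m - 1, by omega⟩, ?_, by simp; omega⟩
        simpa [Nat.sub_add_cancel h1] using hmZ
      · rintro ⟨i, hiZ, rfl⟩
        exact ⟨hiZ, by omega, by have := i.isLt; omega⟩
    rw [cnt, himg, Set.ncard_image_of_injective _ hinj,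
      Set.ncard_eq_toFinset_card', Set.toFinset_setOf]
  have hAX : cnt X n = A.card := hcnt X
  have hBY : cnt Y n = B.card := hcnt Y
  have hval : ∀ σ : Equiv.Perm (Fin n), valCount X Y n σ
      = (univ.filter (fun i : Fin n => i ∈ A ∧ σ i ∈ B)).card := by
    intro σ
    rw [valCount, Set.ncard_eq_toFinset_card', Set.toFinset_setOf]
    congr 1
    ext i
    simp [hA, hB]
  have hVeq : V X Y n k = Nat.card {σ : Equiv.Perm (Fin n) |
      (univ.filter (fun i : Fin n => i ∈ A ∧ σ i ∈ B)).card = k} := by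
    rw [V]
    have hset : {σ : Equiv.Perm (Fin n) | valCount X Y n σ = k}
        = {σ : Equiv.Perm (Fin n) |
            (univ.filter (fun i : Fin n => i ∈ A ∧ σ i ∈ B)).card = k} := by
      ext σ
      rw [Set.mem_setOf_eq, Set.mem_setOf_eq, hval σ]
    rw [hset]
  rw [hVeq, card_perm_filter A B k, Fintype.card_fin, ← hAX, ← hBY,
    Nat.descFactorial_eq_factorial_mul_choose, Nat.descFactorial_eq_factorial_mul_choose]
  ring
end

section
/- For all subsets X, Y of the positive integers and all integers n ≥ 1 and s ≥ 0, the number D_{n,s}^{X,Y} of permutations of [n] with exactly s (X,Y)-descents satisfies D_{n,s}^{X,Y} = (x_n^c)! · Σ_{r=0}^{s} (−1)^{s−r} · C(x_n^c + r, r) · C(n+1, s−r) · Π_{x ∈ X∩[n]} (1 + r + α_{X,n,x} + β_{Y,n,x}). -/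
open scoped Classical

/-- `des_{X,Y}(σ)`: number of `i` with `σ_i > σ_{i+1}`, `σ_i ∈ X` and `σ_{i+1} ∈ Y`
(positions and values of `Fin n` are identified with `{1, ..., n}` via `i ↦ i + 1`). -/
noncomputable def desCount (X Y : Set ℕ) (n : ℕ) (σ : Equiv.Perm (Fin n)) : ℕ :=
  {i : Fin n | ∃ h : (i : ℕ) + 1 < n,
    (σ ⟨(i : ℕ) + 1, h⟩ : ℕ) < (σ i : ℕ) ∧
    ((σ i : ℕ) + 1) ∈ X ∧ ((σ ⟨(i : ℕ) + 1, h⟩ : ℕ) + 1) ∈ Y}.ncard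

/-- `D_{n,s}^{X,Y}`: the number of permutations of `[n]` with exactly `s`
`(X,Y)`-descents. -/
noncomputable def D (X Y : Set ℕ) (n s : ℕ) : ℕ :=
  Nat.card {σ : Equiv.Perm (Fin n) | desCount X Y n σ = s}

/-- `α_{A,n,j} = |{x : j < x ≤ n, x ∉ A}|`. -/
noncomputable def alphaStat (A : Set ℕ) (n j : ℕ) : ℕ := {x : ℕ | j < x ∧ x ≤ n ∧ x ∉ A}.ncard

/-- `β_{A,n,j} = |{x : 1 ≤ x < j, x ∉ A}|`. -/
noncomputable def betaStat (A : Set ℕ) (n j : ℕ) : ℕ := {x : ℕ | 1 ≤ x ∧ x < j ∧ x ∉ A}.ncard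

namespace HRaux

/-- the word of values (shifted by 1) of a permutation -/
noncomputable def word {n : ℕ} (σ : Equiv.Perm (Fin n)) : ℕ → ℕ :=
  fun k => if h : k < n then (σ ⟨k, h⟩ : ℕ) + 1 else 0

/-- descent predicate on a word -/
def pd (X Y : Set ℕ) (w : ℕ → ℕ) (k : ℕ) : Prop :=
  w (k+1) < w k ∧ w k ∈ X ∧ w (k+1) ∈ Y

/-- number of descents among the first m adjacent pairs -/
noncomputable def desw (X Y : Set ℕ) (w : ℕ → ℕ) (m : ℕ) : ℕ :=
  ((Finset.range m).filter (pd X Y w)).card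

lemma word_lt {n : ℕ} (σ : Equiv.Perm (Fin n)) (k : ℕ) : word σ k < n + 1 := by
  unfold word
  split
  · exact Nat.succ_lt_succ (Fin.is_lt _)
  · exact Nat.succ_pos n

lemma word_of_lt {n : ℕ} (σ : Equiv.Perm (Fin n)) {k : ℕ} (h : k < n) :
    word σ k = (σ ⟨k, h⟩ : ℕ) + 1 := by
  unfold word; rw [dif_pos h]

lemma desCount_eq_desw (X Y : Set ℕ) {n : ℕ} (σ : Equiv.Perm (Fin n)) :
    desCount X Y n σ = desw X Y (word σ) (n - 1) := by
  rw [desCount, Set.ncard_eq_toFinset_card', desw]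
  refine Finset.card_bij (fun i _ => (i : ℕ)) ?_ ?_ ?_
  · intro i hi
    simp only [Set.mem_toFinset, Set.mem_setOf_eq] at hi
    obtain ⟨h, h1, h2, h3⟩ := hi
    simp only [Finset.mem_filter, Finset.mem_range, pd]
    refine ⟨by omega, ?_, ?_, ?_⟩
    · rw [word_of_lt σ (by omega : (i:ℕ) < n), word_of_lt σ h]
      simp only [Fin.eta]
      omega
    · rw [word_of_lt σ (by omega : (i:ℕ) < n)]; simpa only [Fin.eta] using h2
    · rw [word_of_lt σ h]; exact h3
  · intro a ha b hb hab
    exact Fin.val_injective hab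
  · intro k hk
    simp only [Finset.mem_filter, Finset.mem_range, pd] at hk
    obtain ⟨hk1, h1, h2, h3⟩ := hk
    have hkn : k < n := by omega
    have hkn1 : k + 1 < n := by omega
    refine ⟨⟨k, hkn⟩, ?_, rfl⟩
    simp only [Set.mem_toFinset, Set.mem_setOf_eq]
    refine ⟨hkn1, ?_, ?_, ?_⟩
    · rw [word_of_lt σ hkn, word_of_lt σ hkn1] at h1; omega
    · rw [word_of_lt σ hkn] at h2; exact h2
    · rw [word_of_lt σ hkn1] at h3; exact h3


/-- insert the largest value at position `p` -/
noncomputable def ins {n : ℕ} (p : Fin (n+1)) (τ : Equiv.Perm (Fin n)) :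
    Equiv.Perm (Fin (n+1)) :=
  (finSuccEquiv' p).trans ((Equiv.optionCongr τ).trans (finSuccEquiv' (Fin.last n)).symm)

lemma ins_self {n : ℕ} (p : Fin (n+1)) (τ : Equiv.Perm (Fin n)) :
    ins p τ p = Fin.last n := by
  simp [ins, finSuccEquiv'_at]

lemma ins_succAbove {n : ℕ} (p : Fin (n+1)) (τ : Equiv.Perm (Fin n)) (j : Fin n) :
    ins p τ (p.succAbove j) = Fin.castSucc (τ j) := by
  simp [ins, finSuccEquiv'_succAbove, finSuccEquiv'_symm_some, Fin.succAbove_last]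

lemma word_ins {n : ℕ} (p : Fin (n+1)) (τ : Equiv.Perm (Fin n)) (k : ℕ) :
    word (ins p τ) k =
      if k < (p : ℕ) then word τ k else if k = (p : ℕ) then n + 1 else word τ (k-1) := by
  rcases lt_trichotomy k (p : ℕ) with hk | hk | hk
  · rw [if_pos hk]
    have hkn : k < n := by have := p.isLt; omega
    have hkn1 : k < n + 1 := by omega
    rw [word_of_lt _ hkn1, word_of_lt _ hkn]
    have : (⟨k, hkn1⟩ : Fin (n+1)) = p.succAbove ⟨k, hkn⟩ := by
      rw [Fin.succAbove_of_castSucc_lt]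
      · rfl
      · exact hk
    rw [this, ins_succAbove]
    rfl
  · rw [if_neg (by omega), if_pos hk]
    have hkn1 : k < n + 1 := by rw [hk]; exact p.isLt
    rw [word_of_lt _ hkn1]
    have : (⟨k, hkn1⟩ : Fin (n+1)) = p := by ext; exact hk
    rw [this, ins_self]
    simp [Fin.last]
  · rw [if_neg (by omega), if_neg (by omega)]
    by_cases hkn : k < n + 1
    · have hk1 : k - 1 < n := by omega
      rw [word_of_lt _ hkn, word_of_lt _ hk1]
      have : (⟨k, hkn⟩ : Fin (n+1)) = p.succAbove ⟨k-1, hk1⟩ := by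
        rw [Fin.succAbove_of_le_castSucc]
        · ext; simp [Fin.succ]; omega
        · simp [Fin.le_def, Fin.castSucc, Fin.castAdd, Fin.castLE]; omega
      rw [this, ins_succAbove]
      rfl
    · unfold word
      rw [dif_neg hkn, dif_neg (by omega)]


lemma desw_insert (X Y : Set ℕ) (w' : ℕ → ℕ) (L p v : ℕ) (hp : p ≤ L)
    (hv : ∀ k, w' k < v) (w : ℕ → ℕ)
    (hw : ∀ k, w k = if k < p then w' k else if k = p then v else w' (k-1)) :
    desw X Y w L + (if 1 ≤ p ∧ p < L ∧ pd X Y w' (p-1) then 1 else 0)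
      = desw X Y w' (L-1) + (if p < L ∧ v ∈ X ∧ w' p ∈ Y then 1 else 0) := by
  have hWlt : ∀ k, k < p → w k = w' k := fun k hk => by rw [hw k, if_pos hk]
  have hWp : w p = v := by rw [hw p, if_neg (by omega), if_pos rfl]
  have hWgt : ∀ k, p < k → w k = w' (k-1) := fun k hk => by
    rw [hw k, if_neg (by omega), if_neg (by omega)]
  have hwlt : ∀ k, k + 1 < p → (pd X Y w k ↔ pd X Y w' k) := by
    intro k hk
    unfold pd
    rw [hWlt k (by omega), hWlt (k+1) (by omega)]
  have hwgt : ∀ k, p ≤ k → (pd X Y w (k+1) ↔ pd X Y w' k) := by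
    intro k hk
    unfold pd
    rw [hWgt (k+1) (by omega), hWgt (k+2) (by omega)]
    have e1 : k + 1 - 1 = k := by omega
    have e2 : k + 2 - 1 = k + 1 := by omega
    rw [e1, e2]
  have hdw : desw X Y w L = ∑ k ∈ Finset.range L, (if pd X Y w k then 1 else 0) :=
    Finset.card_filter _ _
  have hdw' : desw X Y w' (L-1)
      = ∑ k ∈ Finset.range (L-1), (if pd X Y w' k then 1 else 0) :=
    Finset.card_filter _ _
  rcases eq_or_lt_of_le hp with hpL | hpL
  · -- p = L : insertion at the end
    subst hpL
    rw [if_neg (by omega), if_neg (by omega), hdw, hdw']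
    simp only [add_zero]
    rcases Nat.eq_zero_or_pos p with h0 | h0
    · subst h0; simp
    · obtain ⟨L₀, rfl⟩ : ∃ L₀, p = L₀ + 1 := ⟨p - 1, by omega⟩
      rw [Finset.sum_range_succ]
      have hlast : ¬ pd X Y w L₀ := by
        unfold pd
        rw [hWlt L₀ (by omega), hWp]
        intro hcon
        exact absurd hcon.1 (by have := hv L₀; omega)
      rw [if_neg hlast, add_zero, Nat.add_sub_cancel]
      exact Finset.sum_congr rfl fun k hk => by
        rw [if_congr (hwlt k (by simpa using hk)) rfl rfl]
  · -- p < L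
    have hwp : pd X Y w p ↔ (v ∈ X ∧ w' p ∈ Y) := by
      unfold pd
      rw [hWp, hWgt (p+1) (by omega)]
      have e1 : p + 1 - 1 = p := by omega
      rw [e1]
      constructor
      · rintro ⟨-, h2, h3⟩; exact ⟨h2, h3⟩
      · rintro ⟨h2, h3⟩; exact ⟨hv p, h2, h3⟩
    rw [hdw, hdw', Finset.range_eq_Ico, Finset.range_eq_Ico]
    rw [← Finset.sum_Ico_consecutive _ (Nat.zero_le p) (le_of_lt hpL)]
    rw [Finset.sum_eq_sum_Ico_succ_bot hpL]
    have hshift : ∑ k ∈ Finset.Ico (p+1) L, (if pd X Y w k then 1 else 0)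
        = ∑ k ∈ Finset.Ico p (L-1), (if pd X Y w' k then 1 else 0) := by
      rw [Finset.sum_Ico_eq_sum_range, Finset.sum_Ico_eq_sum_range]
      have : L - (p+1) = L - 1 - p := by omega
      rw [this]
      exact Finset.sum_congr rfl fun i _ => by
        have h1 : p + 1 + i = (p + i) + 1 := by omega
        rw [h1, if_congr (hwgt (p+i) (by omega)) rfl rfl]
    rw [hshift, if_congr hwp rfl rfl]
    have hnew : (if p < L ∧ v ∈ X ∧ w' p ∈ Y then 1 else 0)
        = (if v ∈ X ∧ w' p ∈ Y then (1:ℕ) else 0) := by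
      refine if_congr ?_ rfl rfl
      constructor
      · rintro ⟨-, h⟩; exact h
      · intro h; exact ⟨hpL, h⟩
    rw [hnew]
    rcases Nat.eq_zero_or_pos p with h0 | h0
    · subst h0
      have hb : ¬(1 ≤ 0 ∧ 0 < L ∧ pd X Y w' (0-1)) := fun h => absurd h.1 (by norm_num)
      rw [if_neg hb, add_zero]
      simp only [Finset.Ico_self, Finset.sum_empty, zero_add]
      ring
    · -- 1 ≤ p
      have hps : p - 1 + 1 = p := by omega
      have h1 : ∑ k ∈ Finset.Ico 0 p, (if pd X Y w k then 1 else 0)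
          = ∑ k ∈ Finset.Ico 0 (p-1), (if pd X Y w' k then 1 else 0) := by
        rw [← hps, Finset.sum_Ico_succ_top (Nat.zero_le _)]
        have hpm : ¬ pd X Y w (p-1) := by
          unfold pd
          rw [hWlt (p-1) (by omega), hps, hWp]
          intro hcon
          exact absurd hcon.1 (by have := hv (p-1); omega)
        rw [if_neg hpm, add_zero, hps]
        exact Finset.sum_congr rfl fun k hk => by
          have : k < p - 1 := by simpa using (Finset.mem_Ico.mp hk).2
          rw [if_congr (hwlt k (by omega)) rfl rfl]
      rw [h1]
      have h2 : ∑ k ∈ Finset.Ico 0 (L-1), (if pd X Y w' k then 1 else 0)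
          = ∑ k ∈ Finset.Ico 0 (p-1), (if pd X Y w' k then 1 else 0)
            + ((if pd X Y w' (p-1) then 1 else 0)
              + ∑ k ∈ Finset.Ico p (L-1), (if pd X Y w' k then 1 else 0)) := by
        rw [← Finset.sum_Ico_consecutive _ (Nat.zero_le (p-1)) (by omega : p - 1 ≤ L - 1)]
        congr 1
        rw [Finset.sum_eq_sum_Ico_succ_bot (by omega : p - 1 < L - 1), hps]
      rw [h2]
      have hbrk : (if 1 ≤ p ∧ p < L ∧ pd X Y w' (p-1) then 1 else 0)
          = (if pd X Y w' (p-1) then (1:ℕ) else 0) := by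
        refine if_congr ?_ rfl rfl
        constructor
        · rintro ⟨-, -, h⟩; exact h
        · intro h; exact ⟨h0, hpL, h⟩
      rw [hbrk]
      ring


lemma desCount_ins (X Y : Set ℕ) {n : ℕ} (p : Fin (n+1)) (τ : Equiv.Perm (Fin n)) :
    desCount X Y (n+1) (ins p τ)
        + (if 1 ≤ (p:ℕ) ∧ (p:ℕ) < n ∧ pd X Y (word τ) ((p:ℕ)-1) then 1 else 0)
      = desCount X Y n τ
        + (if (p:ℕ) < n ∧ (n+1 : ℕ) ∈ X ∧ word τ (p:ℕ) ∈ Y then 1 else 0) := by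
  rw [desCount_eq_desw, desCount_eq_desw, Nat.add_sub_cancel]
  exact desw_insert X Y (word τ) n (p:ℕ) (n+1) (by omega)
    (word_lt τ) (word (ins p τ)) (word_ins p τ)

lemma ins_injective {n : ℕ} :
    Function.Injective (fun x : Fin (n+1) × Equiv.Perm (Fin n) => ins x.1 x.2) := by
  rintro ⟨p, τ⟩ ⟨q, ρ⟩ h
  simp only at h
  have hpq : p = q := by
    have h1 : ins p τ p = Fin.last n := ins_self p τ
    have h2 : ins q ρ q = Fin.last n := ins_self q ρ
    rw [h] at h1
    exact (ins q ρ).injective (h1.trans h2.symm)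
  subst hpq
  have hτ : τ = ρ := by
    apply Equiv.ext
    intro j
    have h1 : ins p τ (p.succAbove j) = Fin.castSucc (τ j) := ins_succAbove p τ j
    have h2 : ins p ρ (p.succAbove j) = Fin.castSucc (ρ j) := ins_succAbove p ρ j
    rw [h] at h1
    exact Fin.castSucc_injective n (h1.symm.trans h2)
  rw [hτ]

lemma ins_bijective {n : ℕ} :
    Function.Bijective (fun x : Fin (n+1) × Equiv.Perm (Fin n) => ins x.1 x.2) := by
  rw [Fintype.bijective_iff_injective_and_card]
  refine ⟨ins_injective, ?_⟩
  simp [Fintype.card_perm, Nat.factorial_succ]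

lemma D_eq (X Y : Set ℕ) (n s : ℕ) :
    D X Y n s
      = (Finset.univ.filter (fun σ : Equiv.Perm (Fin n) => desCount X Y n σ = s)).card := by
  rw [D, Nat.card_coe_set_eq, Set.ncard_eq_toFinset_card', Set.toFinset_setOf]

lemma D_succ_sum (X Y : Set ℕ) (n s : ℕ) :
    D X Y (n+1) s = ∑ τ : Equiv.Perm (Fin n), ∑ p : Fin (n+1),
      (if desCount X Y (n+1) (ins p τ) = s then 1 else 0) := by
  rw [D_eq, Finset.card_filter]
  rw [← Fintype.sum_bijective _ ins_bijective _ _ (fun x => rfl)]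
  rw [Fintype.sum_prod_type]
  rw [Finset.sum_comm]

lemma cnt_eq_card (A : Set ℕ) (n : ℕ) :
    cnt A n = ((Finset.Icc 1 n).filter (fun x => x ∈ A)).card := by
  rw [cnt, ← Set.ncard_coe_finset]
  congr 1
  ext x
  simp only [Set.mem_inter_iff, Set.mem_Icc, Finset.coe_filter, Finset.mem_Icc,
    Set.mem_setOf_eq]
  tauto

lemma cnt_le (A : Set ℕ) (n : ℕ) : cnt A n ≤ n := by
  rw [cnt_eq_card]
  calc ((Finset.Icc 1 n).filter (fun x => x ∈ A)).card ≤ (Finset.Icc 1 n).card :=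
        Finset.card_filter_le _ _
    _ = n := by rw [Nat.card_Icc]; omega

lemma card_brk (X Y : Set ℕ) {n : ℕ} (τ : Equiv.Perm (Fin n)) :
    ((Finset.univ : Finset (Fin (n+1))).filter
        (fun p : Fin (n+1) => 1 ≤ (p:ℕ) ∧ (p:ℕ) < n ∧ pd X Y (word τ) ((p:ℕ)-1))).card
      = desCount X Y n τ := by
  rw [desCount_eq_desw, desw]
  refine Finset.card_bij (fun p _ => (p:ℕ) - 1) ?_ ?_ ?_
  · intro p hp
    simp only [Finset.mem_filter, Finset.mem_univ, true_and] at hp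
    obtain ⟨h1, h2, h3⟩ := hp
    simp only [Finset.mem_filter, Finset.mem_range]
    exact ⟨by omega, h3⟩
  · intro p hp q hq hpq
    simp only [Finset.mem_filter, Finset.mem_univ, true_and] at hp hq
    obtain ⟨h1, -, -⟩ := hp
    obtain ⟨h2, -, -⟩ := hq
    have : (p:ℕ) = (q:ℕ) := by omega
    exact Fin.val_injective this
  · intro k hk
    simp only [Finset.mem_filter, Finset.mem_range] at hk
    refine ⟨⟨k+1, by omega⟩, ?_, ?_⟩
    · simp only [Finset.mem_filter, Finset.mem_univ, true_and, Fin.val_mk]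
      refine ⟨by omega, by omega, ?_⟩
      simpa using hk.2
    · dsimp only [Fin.val_mk]
      omega

lemma card_new (X Y : Set ℕ) {n : ℕ} (τ : Equiv.Perm (Fin n)) :
    ((Finset.univ : Finset (Fin (n+1))).filter
        (fun p : Fin (n+1) => (p:ℕ) < n ∧ word τ (p:ℕ) ∈ Y)).card = cnt Y n := by
  rw [cnt_eq_card]
  refine Finset.card_bij (fun p _ => word τ (p:ℕ)) ?_ ?_ ?_
  · intro p hp
    simp only [Finset.mem_filter, Finset.mem_univ, true_and] at hp
    obtain ⟨h1, h2⟩ := hp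
    rw [word_of_lt τ h1] at h2 ⊢
    simp only [Finset.mem_filter, Finset.mem_Icc]
    have := (τ ⟨(p:ℕ), h1⟩).isLt
    exact ⟨⟨by omega, by omega⟩, h2⟩
  · intro p hp q hq hpq
    simp only [Finset.mem_filter, Finset.mem_univ, true_and] at hp hq
    rw [word_of_lt τ hp.1, word_of_lt τ hq.1] at hpq
    have h1 : τ ⟨(p:ℕ), hp.1⟩ = τ ⟨(q:ℕ), hq.1⟩ := Fin.val_injective (by omega)
    have h2 := τ.injective h1
    have h3 : (p:ℕ) = (q:ℕ) := Fin.mk_eq_mk.mp h2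
    exact Fin.val_injective h3
  · intro v hv
    simp only [Finset.mem_filter, Finset.mem_Icc] at hv
    obtain ⟨⟨hv1, hv2⟩, hv3⟩ := hv
    set j : Fin n := τ.symm ⟨v-1, by omega⟩ with hj
    refine ⟨⟨(j:ℕ), by have := j.isLt; omega⟩, ?_, ?_⟩
    · simp only [Finset.mem_filter, Finset.mem_univ, true_and]
      have hjn : ((j:ℕ) : ℕ) < n := j.isLt
      refine ⟨hjn, ?_⟩
      rw [word_of_lt τ hjn]
      have : (⟨(j:ℕ), hjn⟩ : Fin n) = j := by ext; rfl
      rw [this, hj, Equiv.apply_symm_apply]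
      simpa using (by omega : v - 1 + 1 = v) ▸ hv3
    · have hjn : ((j:ℕ) : ℕ) < n := j.isLt
      dsimp only [Fin.val_mk]
      rw [word_of_lt τ hjn]
      have : (⟨(j:ℕ), hjn⟩ : Fin n) = j := by ext; rfl
      rw [this, hj, Equiv.apply_symm_apply]
      simp; omega


lemma sum_ite_card {α : Type*} [Fintype α] (P : α → Prop) (a : ℕ) :
    (∑ x : α, if P x then a else 0)
      = a * (Finset.univ.filter (fun x : α => P x)).card := by
  rw [← Finset.sum_filter, Finset.sum_const, smul_eq_mul, mul_comm]

lemma desCount_le_pred (X Y : Set ℕ) {n : ℕ} (τ : Equiv.Perm (Fin n)) :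
    desCount X Y n τ ≤ n - 1 := by
  rw [desCount_eq_desw]
  calc desw X Y (word τ) (n-1) ≤ (Finset.range (n-1)).card := Finset.card_filter_le _ _
    _ = n - 1 := Finset.card_range _

lemma desCount_le_cntY (X Y : Set ℕ) {n : ℕ} (τ : Equiv.Perm (Fin n)) :
    desCount X Y n τ ≤ cnt Y n := by
  rw [desCount_eq_desw, desw, cnt_eq_card]
  apply Finset.card_le_card_of_injOn (fun k => word τ (k+1))
  · intro k hk
    simp only [Finset.mem_coe, Finset.mem_filter, Finset.mem_range] at hk
    obtain ⟨hk1, -, -, hk3⟩ := hk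
    have hkn : k + 1 < n := by omega
    simp only [Finset.mem_coe, Finset.mem_filter, Finset.mem_Icc]
    rw [word_of_lt τ hkn] at hk3 ⊢
    have := (τ ⟨k+1, hkn⟩).isLt
    exact ⟨⟨by omega, by omega⟩, hk3⟩
  · intro k hk k' hk' hkk
    simp only [Finset.coe_filter, Finset.mem_range, Set.mem_setOf_eq] at hk hk'
    have h1 : k + 1 < n := by omega
    have h2 : k' + 1 < n := by omega
    dsimp only at hkk
    rw [word_of_lt τ h1, word_of_lt τ h2] at hkk
    have := τ.injective (Fin.val_injective (by omega : (τ ⟨k+1,h1⟩ : ℕ) = τ ⟨k'+1,h2⟩))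
    have := Fin.mk_eq_mk.mp this
    omega

lemma D_bound_pred (X Y : Set ℕ) {n s : ℕ} (h : D X Y n s ≠ 0) : s ≤ n - 1 := by
  rw [D_eq] at h
  obtain ⟨τ, hτ⟩ := Finset.card_ne_zero.mp h
  simp only [Finset.mem_filter, Finset.mem_univ, true_and] at hτ
  rw [← hτ]
  exact desCount_le_pred X Y τ

lemma D_bound_cntY (X Y : Set ℕ) {n s : ℕ} (h : D X Y n s ≠ 0) : s ≤ cnt Y n := by
  rw [D_eq] at h
  obtain ⟨τ, hτ⟩ := Finset.card_ne_zero.mp h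
  simp only [Finset.mem_filter, Finset.mem_univ, true_and] at hτ
  rw [← hτ]
  exact desCount_le_cntY X Y τ

lemma per_tau_notmem (X Y : Set ℕ) {n : ℕ} (hx : (n+1 : ℕ) ∉ X) (s : ℕ)
    (τ : Equiv.Perm (Fin n)) :
    (∑ p : Fin (n+1), if desCount X Y (n+1) (ins p τ) = s then 1 else 0)
      = (if desCount X Y n τ = s then (n+1) - desCount X Y n τ else 0)
        + (if desCount X Y n τ = s + 1 then desCount X Y n τ else 0) := by
  set d := desCount X Y n τ with hd
  have hins : ∀ p : Fin (n+1),
      desCount X Y (n+1) (ins p τ)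
        + (if 1 ≤ (p:ℕ) ∧ (p:ℕ) < n ∧ pd X Y (word τ) ((p:ℕ)-1) then 1 else 0) = d := by
    intro p
    have h := desCount_ins X Y p τ
    have h2 : (if (p:ℕ) < n ∧ (n+1 : ℕ) ∈ X ∧ word τ (p:ℕ) ∈ Y then (1:ℕ) else 0) = 0 :=
      if_neg (fun hcon => hx hcon.2.1)
    rw [h2, add_zero] at h
    exact h
  rw [← Finset.sum_filter_add_sum_filter_not Finset.univ
    (fun p : Fin (n+1) => 1 ≤ (p:ℕ) ∧ (p:ℕ) < n ∧ pd X Y (word τ) ((p:ℕ)-1))]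
  have e1 : ∑ p ∈ Finset.univ.filter
      (fun p : Fin (n+1) => 1 ≤ (p:ℕ) ∧ (p:ℕ) < n ∧ pd X Y (word τ) ((p:ℕ)-1)),
      (if desCount X Y (n+1) (ins p τ) = s then (1:ℕ) else 0)
      = (if d = s + 1 then d else 0) := by
    rcases eq_or_ne d (s+1) with hds | hds
    · rw [if_pos hds]
      rw [Finset.sum_congr rfl (fun p hp => ?_), Finset.sum_const, smul_eq_mul, mul_one,
        card_brk X Y τ, hd]
      simp only [Finset.mem_filter, Finset.mem_univ, true_and] at hp
      have := hins p
      rw [if_pos hp] at this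
      rw [if_pos (by omega)]
    · rw [if_neg hds]
      apply Finset.sum_eq_zero
      intro p hp
      simp only [Finset.mem_filter, Finset.mem_univ, true_and] at hp
      have := hins p
      rw [if_pos hp] at this
      rw [if_neg (by omega)]
  have e2 : ∑ p ∈ Finset.univ.filter
      (fun p : Fin (n+1) => ¬(1 ≤ (p:ℕ) ∧ (p:ℕ) < n ∧ pd X Y (word τ) ((p:ℕ)-1))),
      (if desCount X Y (n+1) (ins p τ) = s then (1:ℕ) else 0)
      = (if d = s then (n+1) - d else 0) := by
    have hcard : (Finset.univ.filter
        (fun p : Fin (n+1) => ¬(1 ≤ (p:ℕ) ∧ (p:ℕ) < n ∧ pd X Y (word τ) ((p:ℕ)-1)))).card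
        = (n+1) - d := by
      have := Finset.card_filter_add_card_filter_not (s := (Finset.univ : Finset (Fin (n+1))))
        (p := fun p : Fin (n+1) => 1 ≤ (p:ℕ) ∧ (p:ℕ) < n ∧ pd X Y (word τ) ((p:ℕ)-1))
      rw [card_brk X Y τ, ← hd] at this
      simp only [Finset.card_univ, Fintype.card_fin] at this
      omega
    rcases eq_or_ne d s with hds | hds
    · rw [if_pos hds]
      rw [Finset.sum_congr rfl (fun p hp => ?_), Finset.sum_const, smul_eq_mul, mul_one,
        hcard]
      simp only [Finset.mem_filter, Finset.mem_univ, true_and] at hp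
      have := hins p
      rw [if_neg hp, add_zero] at this
      rw [if_pos (by omega)]
    · rw [if_neg hds]
      apply Finset.sum_eq_zero
      intro p hp
      simp only [Finset.mem_filter, Finset.mem_univ, true_and] at hp
      have := hins p
      rw [if_neg hp, add_zero] at this
      rw [if_neg (by omega)]
  rw [e1, e2]
  ring

lemma D_rec_notmem (X Y : Set ℕ) {n : ℕ} (hx : (n+1 : ℕ) ∉ X) (s : ℕ) :
    D X Y (n+1) s = ((n+1) - s) * D X Y n s + (s+1) * D X Y n (s+1) := by
  rw [D_succ_sum]
  rw [Finset.sum_congr rfl (fun τ _ => per_tau_notmem X Y hx s τ)]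
  rw [Finset.sum_add_distrib]
  congr 1
  · rw [← Finset.sum_filter]
    rw [Finset.sum_congr rfl (fun τ hτ => ?_), Finset.sum_const, smul_eq_mul, mul_comm,
      D_eq]
    simp only [Finset.mem_filter, Finset.mem_univ, true_and] at hτ
    rw [hτ]
  · rw [← Finset.sum_filter]
    rw [Finset.sum_congr rfl (fun τ hτ => ?_), Finset.sum_const, smul_eq_mul, mul_comm,
      D_eq]
    simp only [Finset.mem_filter, Finset.mem_univ, true_and] at hτ
    rw [hτ]


lemma per_tau_mem (X Y : Set ℕ) {n : ℕ} (hx : (n+1 : ℕ) ∈ X) (s : ℕ)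
    (τ : Equiv.Perm (Fin n)) :
    (∑ p : Fin (n+1), if desCount X Y (n+1) (ins p τ) = s then 1 else 0)
      = (if desCount X Y n τ = s then (n+1) - (cnt Y n - desCount X Y n τ) else 0)
        + (if desCount X Y n τ + 1 = s then cnt Y n - desCount X Y n τ else 0) := by
  classical
  set d := desCount X Y n τ with hd
  set brk : Fin (n+1) → Prop :=
    fun p => 1 ≤ (p:ℕ) ∧ (p:ℕ) < n ∧ pd X Y (word τ) ((p:ℕ)-1) with hbrk
  set nw : Fin (n+1) → Prop := fun p => (p:ℕ) < n ∧ word τ (p:ℕ) ∈ Y with hnw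
  have hbn : ∀ p, brk p → nw p := by
    intro p hp
    obtain ⟨h1, h2, h3⟩ := hp
    refine ⟨h2, ?_⟩
    have := h3.2.2
    have e : (p:ℕ) - 1 + 1 = (p:ℕ) := by omega
    rwa [e] at this
  have hins : ∀ p : Fin (n+1),
      desCount X Y (n+1) (ins p τ) = d + (if nw p ∧ ¬ brk p then 1 else 0) := by
    intro p
    have h := desCount_ins X Y p τ
    have hnew : (if (p:ℕ) < n ∧ (n+1 : ℕ) ∈ X ∧ word τ (p:ℕ) ∈ Y then (1:ℕ) else 0)
        = (if nw p then 1 else 0) := by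
      refine if_congr ?_ rfl rfl
      constructor
      · rintro ⟨a, -, c⟩; exact ⟨a, c⟩
      · rintro ⟨a, c⟩; exact ⟨a, hx, c⟩
    rw [hnew] at h
    by_cases hb : brk p
    · rw [if_pos hb, if_pos (hbn p hb)] at h
      rw [if_neg (fun hc : nw p ∧ ¬ brk p => hc.2 hb)]
      omega
    · rw [if_neg hb, add_zero] at h
      by_cases hn : nw p
      · rw [if_pos hn] at h
        rw [if_pos ⟨hn, hb⟩]
        omega
      · rw [if_neg hn, add_zero] at h
        rw [if_neg (fun hc => hn hc.1)]
        omega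
  have hcardq : (Finset.univ.filter (fun p : Fin (n+1) => nw p ∧ ¬ brk p)).card
      = cnt Y n - d := by
    have h1 : (Finset.univ.filter (fun p : Fin (n+1) => nw p ∧ brk p)).card
        + (Finset.univ.filter (fun p : Fin (n+1) => nw p ∧ ¬ brk p)).card
        = (Finset.univ.filter (fun p : Fin (n+1) => nw p)).card := by
      have ha : (Finset.univ.filter (fun p : Fin (n+1) => nw p)).filter brk
          = Finset.univ.filter (fun p : Fin (n+1) => nw p ∧ brk p) :=
        Finset.filter_filter _ _ _
      have hb2 : (Finset.univ.filter (fun p : Fin (n+1) => nw p)).filter (fun p => ¬ brk p)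
          = Finset.univ.filter (fun p : Fin (n+1) => nw p ∧ ¬ brk p) :=
        Finset.filter_filter _ _ _
      have hmain := Finset.card_filter_add_card_filter_not
        (s := Finset.univ.filter (fun p : Fin (n+1) => nw p)) (p := brk)
      rw [ha, hb2] at hmain
      exact hmain
    have h2 : (Finset.univ.filter (fun p : Fin (n+1) => nw p ∧ brk p))
        = (Finset.univ.filter (fun p : Fin (n+1) => brk p)) := by
      apply Finset.filter_congr
      intro p _
      constructor
      · rintro ⟨-, h⟩; exact h
      · intro h; exact ⟨hbn p h, h⟩
    rw [h2, card_brk X Y τ, ← hd, card_new X Y τ] at h1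
    omega
  rw [Finset.sum_congr rfl (fun p _ => by rw [hins p])]
  rw [← Finset.sum_filter_add_sum_filter_not Finset.univ
    (fun p : Fin (n+1) => nw p ∧ ¬ brk p)]
  have e1 : ∑ p ∈ Finset.univ.filter (fun p : Fin (n+1) => nw p ∧ ¬ brk p),
      (if d + (if nw p ∧ ¬ brk p then 1 else 0) = s then (1:ℕ) else 0)
      = (if d + 1 = s then cnt Y n - d else 0) := by
    have hstep : ∀ p ∈ Finset.univ.filter (fun p : Fin (n+1) => nw p ∧ ¬ brk p),
        (if d + (if nw p ∧ ¬ brk p then 1 else 0) = s then (1:ℕ) else 0)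
        = (if d + 1 = s then (1:ℕ) else 0) := by
      intro p hp
      simp only [Finset.mem_filter, Finset.mem_univ, true_and] at hp
      rw [if_pos hp]
    rw [Finset.sum_congr rfl hstep, Finset.sum_const, smul_eq_mul, hcardq]
    rcases eq_or_ne (d+1) s with h | h
    · rw [if_pos h, if_pos h, mul_one]
    · rw [if_neg h, if_neg h, mul_zero]
  have e2 : ∑ p ∈ Finset.univ.filter (fun p : Fin (n+1) => ¬(nw p ∧ ¬ brk p)),
      (if d + (if nw p ∧ ¬ brk p then 1 else 0) = s then (1:ℕ) else 0)
      = (if d = s then (n+1) - (cnt Y n - d) else 0) := by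
    have hcard : (Finset.univ.filter (fun p : Fin (n+1) => ¬(nw p ∧ ¬ brk p))).card
        = (n+1) - (cnt Y n - d) := by
      have := Finset.card_filter_add_card_filter_not
        (s := (Finset.univ : Finset (Fin (n+1))))
        (p := fun p : Fin (n+1) => nw p ∧ ¬ brk p)
      rw [hcardq] at this
      simp only [Finset.card_univ, Fintype.card_fin] at this
      omega
    have hstep : ∀ p ∈ Finset.univ.filter (fun p : Fin (n+1) => ¬(nw p ∧ ¬ brk p)),
        (if d + (if nw p ∧ ¬ brk p then 1 else 0) = s then (1:ℕ) else 0)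
        = (if d = s then (1:ℕ) else 0) := by
      intro p hp
      simp only [Finset.mem_filter, Finset.mem_univ, true_and] at hp
      rw [if_neg hp, add_zero]
    rw [Finset.sum_congr rfl hstep, Finset.sum_const, smul_eq_mul, hcard]
    rcases eq_or_ne d s with h | h
    · rw [if_pos h, if_pos h, mul_one]
    · rw [if_neg h, if_neg h, mul_zero]
  rw [e1, e2]
  ring

lemma D_rec_mem (X Y : Set ℕ) {n : ℕ} (hx : (n+1 : ℕ) ∈ X) (s : ℕ) :
    D X Y (n+1) s = ((n+1) - (cnt Y n - s)) * D X Y n s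
      + (if 1 ≤ s then (cnt Y n - (s-1)) * D X Y n (s-1) else 0) := by
  rw [D_succ_sum]
  rw [Finset.sum_congr rfl (fun τ _ => per_tau_mem X Y hx s τ)]
  rw [Finset.sum_add_distrib]
  congr 1
  · rw [← Finset.sum_filter]
    rw [Finset.sum_congr rfl (fun τ hτ => ?_), Finset.sum_const, smul_eq_mul, mul_comm,
      D_eq]
    simp only [Finset.mem_filter, Finset.mem_univ, true_and] at hτ
    rw [hτ]
  · rcases Nat.eq_zero_or_pos s with h0 | h0
    · subst h0
      rw [if_neg (by omega)]
      apply Finset.sum_eq_zero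
      intro τ _
      rw [if_neg (by omega)]
    · rw [if_pos (show 1 ≤ s from h0)]
      have hcong : ∀ τ : Equiv.Perm (Fin n),
          (if desCount X Y n τ + 1 = s then cnt Y n - desCount X Y n τ else 0)
          = (if desCount X Y n τ = s - 1 then cnt Y n - desCount X Y n τ else 0) := by
        intro τ
        refine if_congr ?_ rfl rfl
        omega
      rw [Finset.sum_congr rfl (fun τ _ => hcong τ)]
      rw [← Finset.sum_filter]
      rw [Finset.sum_congr rfl (fun τ hτ => ?_), Finset.sum_const, smul_eq_mul, mul_comm,
        D_eq]
      simp only [Finset.mem_filter, Finset.mem_univ, true_and] at hτ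
      rw [hτ]


lemma D_rec_notmem_int (X Y : Set ℕ) {n : ℕ} (hx : (n+1 : ℕ) ∉ X) (s : ℕ) :
    (D X Y (n+1) s : ℤ) = ((n:ℤ)+1-s) * D X Y n s + ((s:ℤ)+1) * D X Y n (s+1) := by
  have h := D_rec_notmem X Y hx s
  have t1 : (((n+1) - s : ℕ) : ℤ) * (D X Y n s : ℤ) = ((n:ℤ)+1-s) * D X Y n s := by
    by_cases hD : D X Y n s = 0
    · rw [hD]; push_cast; ring
    · have h1 : s ≤ n - 1 := D_bound_pred X Y hD
      have : (((n+1) - s : ℕ) : ℤ) = (n:ℤ)+1-s := by omega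
      rw [this]
  calc (D X Y (n+1) s : ℤ) = ((((n+1) - s) * D X Y n s + (s+1) * D X Y n (s+1) : ℕ) : ℤ) := by
        rw [h]
    _ = (((n+1) - s : ℕ) : ℤ) * (D X Y n s : ℤ) + ((s:ℤ)+1) * D X Y n (s+1) := by
        push_cast; ring
    _ = _ := by rw [t1]

lemma D_rec_mem_int_zero (X Y : Set ℕ) {n : ℕ} (hx : (n+1 : ℕ) ∈ X) :
    (D X Y (n+1) 0 : ℤ) = ((n:ℤ)+1-cnt Y n) * D X Y n 0 := by
  have h := D_rec_mem X Y hx 0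
  rw [if_neg (by omega), add_zero, Nat.sub_zero] at h
  have hy : cnt Y n ≤ n := cnt_le Y n
  calc (D X Y (n+1) 0 : ℤ) = ((((n+1) - cnt Y n) * D X Y n 0 : ℕ) : ℤ) := by rw [h]
    _ = (((n+1) - cnt Y n : ℕ) : ℤ) * (D X Y n 0 : ℤ) := by push_cast; ring
    _ = _ := by
      have : (((n+1) - cnt Y n : ℕ) : ℤ) = (n:ℤ)+1-cnt Y n := by omega
      rw [this]

lemma D_rec_mem_int_succ (X Y : Set ℕ) {n : ℕ} (hx : (n+1 : ℕ) ∈ X) (s : ℕ) :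
    (D X Y (n+1) (s+1) : ℤ)
      = ((n:ℤ)+2+s-cnt Y n) * D X Y n (s+1) + ((cnt Y n : ℤ)-s) * D X Y n s := by
  have h := D_rec_mem X Y hx (s+1)
  rw [if_pos (by omega : 1 ≤ s+1), Nat.add_sub_cancel] at h
  have hy : cnt Y n ≤ n := cnt_le Y n
  have t1 : (((n+1) - (cnt Y n - (s+1)) : ℕ) : ℤ) * (D X Y n (s+1) : ℤ)
      = ((n:ℤ)+2+s-cnt Y n) * D X Y n (s+1) := by
    by_cases hD : D X Y n (s+1) = 0
    · rw [hD]; push_cast; ring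
    · have h1 : s+1 ≤ cnt Y n := D_bound_cntY X Y hD
      have : (((n+1) - (cnt Y n - (s+1)) : ℕ) : ℤ) = (n:ℤ)+2+s-cnt Y n := by omega
      rw [this]
  have t2 : ((cnt Y n - s : ℕ) : ℤ) * (D X Y n s : ℤ) = ((cnt Y n : ℤ) - s) * D X Y n s := by
    by_cases hD : D X Y n s = 0
    · rw [hD]; push_cast; ring
    · have h1 : s ≤ cnt Y n := D_bound_cntY X Y hD
      have : ((cnt Y n - s : ℕ) : ℤ) = (cnt Y n : ℤ) - s := by omega
      rw [this]
  calc (D X Y (n+1) (s+1) : ℤ)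
      = ((((n+1) - (cnt Y n - (s+1))) * D X Y n (s+1) + (cnt Y n - s) * D X Y n s : ℕ) : ℤ) := by
        rw [h]
    _ = (((n+1) - (cnt Y n - (s+1)) : ℕ) : ℤ) * (D X Y n (s+1) : ℤ)
        + ((cnt Y n - s : ℕ) : ℤ) * (D X Y n s : ℤ) := by push_cast; ring
    _ = _ := by rw [t1, t2]

/- ### statistics lemmas -/

lemma alpha_eq_card (A : Set ℕ) (n j : ℕ) :
    alphaStat A n j = ((Finset.Ioc j n).filter (fun x => x ∉ A)).card := by
  rw [alphaStat, ← Set.ncard_coe_finset]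
  congr 1
  ext x
  simp only [Set.mem_setOf_eq, Finset.coe_filter, Finset.mem_Ioc]
  tauto

lemma beta_eq_card (A : Set ℕ) (n j : ℕ) :
    betaStat A n j = ((Finset.Ico 1 j).filter (fun x => x ∉ A)).card := by
  rw [betaStat, ← Set.ncard_coe_finset]
  congr 1
  ext x
  simp only [Set.mem_setOf_eq, Finset.coe_filter, Finset.mem_Ico]
  tauto

lemma Icc_succ (n : ℕ) : Finset.Icc 1 (n+1) = insert (n+1) (Finset.Icc 1 n) := by
  ext x
  simp only [Finset.mem_Icc, Finset.mem_insert]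
  omega

lemma Ioc_succ (j n : ℕ) (hj : j ≤ n) :
    Finset.Ioc j (n+1) = insert (n+1) (Finset.Ioc j n) := by
  ext x
  simp only [Finset.mem_Ioc, Finset.mem_insert]
  omega

lemma cnt_succ_mem {A : Set ℕ} {n : ℕ} (h : (n+1 : ℕ) ∈ A) :
    cnt A (n+1) = cnt A n + 1 := by
  rw [cnt_eq_card, cnt_eq_card, Icc_succ, Finset.filter_insert, if_pos h,
    Finset.card_insert_of_notMem (by simp)]

lemma cnt_succ_notmem {A : Set ℕ} {n : ℕ} (h : (n+1 : ℕ) ∉ A) :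
    cnt A (n+1) = cnt A n := by
  rw [cnt_eq_card, cnt_eq_card, Icc_succ, Finset.filter_insert, if_neg h]

lemma alpha_succ_mem {A : Set ℕ} {n j : ℕ} (h : (n+1 : ℕ) ∈ A) (hj : j ≤ n) :
    alphaStat A (n+1) j = alphaStat A n j := by
  rw [alpha_eq_card, alpha_eq_card, Ioc_succ j n hj, Finset.filter_insert,
    if_neg (by simp [h])]

lemma alpha_succ_notmem {A : Set ℕ} {n j : ℕ} (h : (n+1 : ℕ) ∉ A) (hj : j ≤ n) :
    alphaStat A (n+1) j = alphaStat A n j + 1 := by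
  rw [alpha_eq_card, alpha_eq_card, Ioc_succ j n hj, Finset.filter_insert, if_pos h,
    Finset.card_insert_of_notMem (by simp)]

lemma alpha_last (A : Set ℕ) (n : ℕ) : alphaStat A (n+1) (n+1) = 0 := by
  rw [alpha_eq_card]
  simp

lemma beta_last (A : Set ℕ) (m n : ℕ) : betaStat A m (n+1) = n - cnt A n := by
  rw [beta_eq_card, cnt_eq_card]
  have h1 : Finset.Ico 1 (n+1) = Finset.Icc 1 n := by
    ext x; simp only [Finset.mem_Ico, Finset.mem_Icc]; omega
  rw [h1]
  have h2 := Finset.card_filter_add_card_filter_not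
    (s := Finset.Icc 1 n) (p := fun x => x ∈ A)
  rw [Nat.card_Icc] at h2
  have h3 : ((Finset.Icc 1 n).filter (fun x => ¬ x ∈ A)).card
      = ((Finset.Icc 1 n).filter (fun x => x ∉ A)).card := rfl
  omega

lemma beta_any (A : Set ℕ) (m m' j : ℕ) : betaStat A m j = betaStat A m' j := rfl

/- ### binomial identities over ℤ -/

lemma choose_key (N k : ℕ) (hk : 1 ≤ k) :
    (k:ℤ) * ((N.choose k : ℕ) : ℤ) = ((N:ℤ)+1-k) * ((N.choose (k-1) : ℕ) : ℤ) := by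
  obtain ⟨j, rfl⟩ : ∃ j, k = j + 1 := ⟨k - 1, by omega⟩
  simp only [Nat.add_sub_cancel]
  rcases le_or_gt j N with h | h
  · have hid := Nat.choose_succ_right_eq N j
    have hcast := congrArg (fun m : ℕ => (m : ℤ)) hid
    push_cast [Nat.cast_sub h] at hcast
    push_cast
    linarith
  · rw [Nat.choose_eq_zero_of_lt h, Nat.choose_eq_zero_of_lt (by omega)]
    push_cast
    ring

lemma pascal_int (N k : ℕ) (hk : 1 ≤ k) :
    (((N+1).choose k : ℕ) : ℤ) = ((N.choose k : ℕ) : ℤ) + ((N.choose (k-1) : ℕ) : ℤ) := by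
  obtain ⟨j, rfl⟩ : ∃ j, k = j + 1 := ⟨k - 1, by omega⟩
  simp only [Nat.add_sub_cancel]
  have := Nat.choose_succ_succ N j
  push_cast [this]
  ring

lemma term_id (N k : ℕ) (hk : 1 ≤ k) (a : ℤ) :
    (a - k) * (((N+2).choose k : ℕ) : ℤ)
      = a * (((N+1).choose k : ℕ) : ℤ) - ((N:ℤ)+2-a) * (((N+1).choose (k-1) : ℕ) : ℤ) := by
  have hp := pascal_int (N+1) k hk
  have hkey := choose_key (N+1) k hk
  push_cast at hp hkey ⊢
  linear_combination (a - (k:ℤ)) * hp - hkey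


lemma alg_mem (c N t : ℕ) (y : ℤ) (P : ℕ → ℤ) :
    ((N:ℤ)+2+t-y) * ∑ r ∈ Finset.range (t+2),
        (-1:ℤ)^(t+1-r) * ((c+r).choose r : ℤ) * (((N+1).choose (t+1-r) : ℕ) : ℤ) * P r
      + (y-(t:ℤ)) * ∑ r ∈ Finset.range (t+1),
        (-1:ℤ)^(t-r) * ((c+r).choose r : ℤ) * (((N+1).choose (t-r) : ℕ) : ℤ) * P r
    = ∑ r ∈ Finset.range (t+2),
        (-1:ℤ)^(t+1-r) * ((c+r).choose r : ℤ) * (((N+2).choose (t+1-r) : ℕ) : ℤ)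
          * ((1+(r:ℤ)+(N:ℤ)-y) * P r) := by
  have hpeel1 : ∑ r ∈ Finset.range (t+2),
      (-1:ℤ)^(t+1-r) * ((c+r).choose r : ℤ) * (((N+1).choose (t+1-r) : ℕ) : ℤ) * P r
      = (∑ r ∈ Finset.range (t+1),
          (-1:ℤ)^(t+1-r) * ((c+r).choose r : ℤ) * (((N+1).choose (t+1-r) : ℕ) : ℤ) * P r)
        + (-1:ℤ)^(t+1-(t+1)) * ((c+(t+1)).choose (t+1) : ℤ)
            * (((N+1).choose (t+1-(t+1)) : ℕ) : ℤ) * P (t+1) :=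
    Finset.sum_range_succ _ (t+1)
  have hpeel2 : ∑ r ∈ Finset.range (t+2),
      (-1:ℤ)^(t+1-r) * ((c+r).choose r : ℤ) * (((N+2).choose (t+1-r) : ℕ) : ℤ)
          * ((1+(r:ℤ)+(N:ℤ)-y) * P r)
      = (∑ r ∈ Finset.range (t+1),
          (-1:ℤ)^(t+1-r) * ((c+r).choose r : ℤ) * (((N+2).choose (t+1-r) : ℕ) : ℤ)
            * ((1+(r:ℤ)+(N:ℤ)-y) * P r))
        + (-1:ℤ)^(t+1-(t+1)) * ((c+(t+1)).choose (t+1) : ℤ)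
            * (((N+2).choose (t+1-(t+1)) : ℕ) : ℤ) * ((1+((t+1:ℕ):ℤ)+(N:ℤ)-y) * P (t+1)) :=
    Finset.sum_range_succ _ (t+1)
  rw [hpeel1, hpeel2]
  have hsum : ∑ r ∈ Finset.range (t+1),
      (-1:ℤ)^(t+1-r) * ((c+r).choose r : ℤ) * (((N+2).choose (t+1-r) : ℕ) : ℤ)
        * ((1+(r:ℤ)+(N:ℤ)-y) * P r)
      = ((N:ℤ)+2+t-y) * ∑ r ∈ Finset.range (t+1),
          (-1:ℤ)^(t+1-r) * ((c+r).choose r : ℤ) * (((N+1).choose (t+1-r) : ℕ) : ℤ) * P r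
        + (y-(t:ℤ)) * ∑ r ∈ Finset.range (t+1),
          (-1:ℤ)^(t-r) * ((c+r).choose r : ℤ) * (((N+1).choose (t-r) : ℕ) : ℤ) * P r := by
    rw [Finset.mul_sum, Finset.mul_sum, ← Finset.sum_add_distrib]
    refine Finset.sum_congr rfl ?_
    intro r hr
    have hrt : r ≤ t := by simpa [Nat.lt_succ_iff] using hr
    set j := t - r with hj
    have e1 : t + 1 - r = j + 1 := by omega
    rw [e1, pow_succ]
    have hid := term_id N (j+1) (by omega) ((N:ℤ)+2+(t:ℤ)-y)
    simp only [Nat.add_sub_cancel] at hid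
    have hcast : (j:ℤ) = (t:ℤ) - (r:ℤ) := by omega
    push_cast at hid
    rw [hcast] at hid
    linear_combination ((-1:ℤ)^j * (-1) * (((c+r).choose r : ℕ) : ℤ) * P r) * hid
  rw [hsum]
  simp only [Nat.sub_self, pow_zero, Nat.choose_zero_right]
  push_cast
  ring

lemma alg_notmem (c N s : ℕ) (P : ℕ → ℤ) :
    ((N:ℤ)+1-s) * ∑ r ∈ Finset.range (s+1),
        (-1:ℤ)^(s-r) * ((c+r).choose r : ℤ) * (((N+1).choose (s-r) : ℕ) : ℤ) * P r
      + ((s:ℤ)+1) * ∑ r ∈ Finset.range (s+2),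
        (-1:ℤ)^(s+1-r) * ((c+r).choose r : ℤ) * (((N+1).choose (s+1-r) : ℕ) : ℤ) * P r
    = ((c:ℤ)+1) * ∑ r ∈ Finset.range (s+1),
        (-1:ℤ)^(s-r) * ((c+1+r).choose r : ℤ) * (((N+2).choose (s-r) : ℕ) : ℤ) * P (r+1) := by
  set g : ℕ → ℤ := fun r =>
    (r:ℤ) * ((c+r).choose r : ℤ) * (-1:ℤ)^(s+1-r) * (((N+2).choose (s+1-r) : ℕ) : ℤ) * P r
    with hg
  have hrhs : ((c:ℤ)+1) * ∑ r ∈ Finset.range (s+1),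
      (-1:ℤ)^(s-r) * ((c+1+r).choose r : ℤ) * (((N+2).choose (s-r) : ℕ) : ℤ) * P (r+1)
      = ∑ r ∈ Finset.range (s+2), g r := by
    have hg0 : g 0 = 0 := by simp only [hg]; push_cast; ring
    have hsplit : ∑ r ∈ Finset.range (s+2), g r
        = (∑ r ∈ Finset.range (s+1), g (r+1)) + g 0 := Finset.sum_range_succ' g (s+1)
    rw [hsplit, hg0, add_zero, Finset.mul_sum]
    refine Finset.sum_congr rfl ?_
    intro r hr
    simp only [hg]
    have e1 : s + 1 - (r + 1) = s - r := by omega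
    rw [e1]
    have hch : (r+1) * ((c+r+1).choose (r+1)) = (c+1) * ((c+1+r).choose r) := by
      have h0 := Nat.choose_succ_right_eq (c+r+1) r
      have e2 : c + r + 1 - r = c + 1 := by omega
      rw [e2] at h0
      have e3 : c + 1 + r = c + r + 1 := by omega
      rw [e3, mul_comm, h0, mul_comm]
    have hcast := congrArg (fun m : ℕ => (m : ℤ)) hch
    push_cast at hcast
    push_cast
    simp only [Nat.add_succ]
    linear_combination (-(-1:ℤ)^(s-r) * (((N+2).choose (s-r) : ℕ) : ℤ) * P (r+1)) * hcast
  rw [hrhs]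
  have h2 : ∑ r ∈ Finset.range (s+2), g r = (∑ r ∈ Finset.range (s+1), g r) + g (s+1) :=
    Finset.sum_range_succ g (s+1)
  have h3 : ∑ r ∈ Finset.range (s+2),
      (-1:ℤ)^(s+1-r) * ((c+r).choose r : ℤ) * (((N+1).choose (s+1-r) : ℕ) : ℤ) * P r
      = (∑ r ∈ Finset.range (s+1),
          (-1:ℤ)^(s+1-r) * ((c+r).choose r : ℤ) * (((N+1).choose (s+1-r) : ℕ) : ℤ) * P r)
        + (-1:ℤ)^(s+1-(s+1)) * ((c+(s+1)).choose (s+1) : ℤ)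
            * (((N+1).choose (s+1-(s+1)) : ℕ) : ℤ) * P (s+1) :=
    Finset.sum_range_succ _ (s+1)
  rw [h2, h3]
  have hsum : ∑ r ∈ Finset.range (s+1), g r
      = ((N:ℤ)+1-s) * ∑ r ∈ Finset.range (s+1),
          (-1:ℤ)^(s-r) * ((c+r).choose r : ℤ) * (((N+1).choose (s-r) : ℕ) : ℤ) * P r
        + ((s:ℤ)+1) * ∑ r ∈ Finset.range (s+1),
          (-1:ℤ)^(s+1-r) * ((c+r).choose r : ℤ) * (((N+1).choose (s+1-r) : ℕ) : ℤ) * P r := by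
    rw [Finset.mul_sum, Finset.mul_sum, ← Finset.sum_add_distrib]
    refine Finset.sum_congr rfl ?_
    intro r hr
    have hrt : r ≤ s := by simpa [Nat.lt_succ_iff] using hr
    simp only [hg]
    set j := s - r with hj
    have e1 : s + 1 - r = j + 1 := by omega
    rw [e1, pow_succ]
    have hid := term_id N (j+1) (by omega) ((s:ℤ)+1)
    simp only [Nat.add_sub_cancel] at hid
    have hcast : (j:ℤ) = (s:ℤ) - (r:ℤ) := by omega
    push_cast at hid
    rw [hcast] at hid
    linear_combination (-(-1:ℤ)^j * (((c+r).choose r : ℕ) : ℤ) * P r) * hid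
  rw [hsum]
  simp only [hg, Nat.sub_self, pow_zero, Nat.choose_zero_right]
  push_cast
  ring


lemma D_zero (X Y : Set ℕ) (s : ℕ) : D X Y 0 s = if s = 0 then 1 else 0 := by
  rw [D_eq]
  have hdes : ∀ σ : Equiv.Perm (Fin 0), desCount X Y 0 σ = 0 := by
    intro σ
    rw [desCount_eq_desw, desw]
    simp
  rcases eq_or_ne s 0 with h | h
  · subst h
    rw [if_pos rfl]
    have : (Finset.univ.filter (fun σ : Equiv.Perm (Fin 0) => desCount X Y 0 σ = 0))
        = Finset.univ := by
      apply Finset.filter_true_of_mem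
      intro σ _
      exact hdes σ
    rw [this, Finset.card_univ]
    simp [Fintype.card_perm]
  · rw [if_neg h]
    rw [Finset.card_eq_zero]
    apply Finset.filter_false_of_mem
    intro σ _
    rw [hdes σ]
    omega

lemma alt_sum (s : ℕ) :
    ∑ r ∈ Finset.range (s+1), (-1:ℤ)^(s-r) * ((Nat.choose 1 (s-r) : ℕ) : ℤ)
      = if s = 0 then 1 else 0 := by
  induction s with
  | zero => simp
  | succ t IH =>
    have hsplit : ∑ r ∈ Finset.range (t+2), (-1:ℤ)^(t+1-r) * ((Nat.choose 1 (t+1-r) : ℕ) : ℤ)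
        = (∑ r ∈ Finset.range (t+1), (-1:ℤ)^(t+1-(r+1)) * ((Nat.choose 1 (t+1-(r+1)) : ℕ) : ℤ))
          + (-1:ℤ)^(t+1-0) * ((Nat.choose 1 (t+1-0) : ℕ) : ℤ) :=
      Finset.sum_range_succ' _ (t+1)
    rw [hsplit]
    have hcongr : ∑ r ∈ Finset.range (t+1),
        (-1:ℤ)^(t+1-(r+1)) * ((Nat.choose 1 (t+1-(r+1)) : ℕ) : ℤ)
        = ∑ r ∈ Finset.range (t+1), (-1:ℤ)^(t-r) * ((Nat.choose 1 (t-r) : ℕ) : ℤ) := by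
      refine Finset.sum_congr rfl ?_
      intro r hr
      have e : t + 1 - (r+1) = t - r := by omega
      rw [e]
    rw [hcongr, IH]
    rcases eq_or_ne t 0 with h | h
    · subst h
      norm_num
    · rw [if_neg h, if_neg (by omega : ¬ t + 1 = 0)]
      rw [Nat.sub_zero, Nat.choose_eq_zero_of_lt (by omega : 1 < t + 1)]
      simp

end HRaux

/-- Theorem 3 (Hall–Remmel): for all `X, Y ⊆ ℕ₊`, `n ≥ 1`, `s ≥ 0`,
`D_{n,s}^{X,Y} = x_n^c! ∑_{r=0}^s (-1)^{s-r} C(x_n^c + r, r) C(n+1, s-r)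
∏_{x ∈ X_n} (1 + r + α_{X,n,x} + β_{Y,n,x})`. -/
theorem HR_formula_one (X Y : Set ℕ) (hX : 0 ∉ X) (hY : 0 ∉ Y) (n s : ℕ) (hn : 1 ≤ n) :
    (D X Y n s : ℤ) =
      ((n - cnt X n).factorial : ℤ) *
        ∑ r ∈ Finset.range (s + 1),
          (-1 : ℤ) ^ (s - r) * ((n - cnt X n + r).choose r : ℤ) *
            ((n + 1).choose (s - r) : ℤ) *
            ∏ x ∈ (Finset.Icc 1 n).filter (· ∈ X),
              (1 + (r : ℤ) + (alphaStat X n x : ℤ) + (betaStat Y n x : ℤ)) := by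
  clear hn hX hY
  induction n generalizing s with
  | zero =>
    have hcnt0 : cnt X 0 = 0 := by
      rw [HRaux.cnt_eq_card]
      rw [Finset.Icc_eq_empty (by omega)]
      simp
    have hIcc0 : Finset.Icc 1 0 = (∅ : Finset ℕ) := Finset.Icc_eq_empty (by omega)
    rw [hcnt0, hIcc0]
    simp only [Nat.sub_zero, Nat.zero_sub, Nat.factorial_zero, Nat.cast_one, one_mul,
      Finset.filter_empty, Finset.prod_empty, mul_one, Nat.zero_add]
    have hsum : ∑ r ∈ Finset.range (s+1),
        (-1:ℤ)^(s-r) * ((r.choose r : ℕ) : ℤ) * ((Nat.choose 1 (s-r) : ℕ) : ℤ)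
        = ∑ r ∈ Finset.range (s+1), (-1:ℤ)^(s-r) * ((Nat.choose 1 (s-r) : ℕ) : ℤ) := by
      refine Finset.sum_congr rfl ?_
      intro r hr
      rw [Nat.choose_self]
      push_cast
      ring
    rw [hsum, HRaux.alt_sum, HRaux.D_zero]
    rcases eq_or_ne s 0 with h | h
    · rw [if_pos h, if_pos h]; norm_num
    · rw [if_neg h, if_neg h]; norm_num
  | succ N IH =>
    have hyN : cnt Y N ≤ N := HRaux.cnt_le Y N
    have hxN : cnt X N ≤ N := HRaux.cnt_le X N
    have e2 : N + 1 + 1 = N + 2 := rfl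
    by_cases hx : (N+1 : ℕ) ∈ X
    · -- N+1 ∈ X
      have hc : (N+1) - cnt X (N+1) = N - cnt X N := by
        rw [HRaux.cnt_succ_mem hx]; omega
      have hprod : ∀ r : ℕ,
          (∏ x ∈ (Finset.Icc 1 (N+1)).filter (· ∈ X),
            (1 + (r:ℤ) + (alphaStat X (N+1) x : ℤ) + (betaStat Y (N+1) x : ℤ)))
          = (1 + (r:ℤ) + (N:ℤ) - (cnt Y N : ℤ)) * ∏ x ∈ (Finset.Icc 1 N).filter (· ∈ X),
              (1 + (r:ℤ) + (alphaStat X N x : ℤ) + (betaStat Y N x : ℤ)) := by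
        intro r
        rw [HRaux.Icc_succ, Finset.filter_insert, if_pos hx,
          Finset.prod_insert (by simp)]
        congr 1
        · rw [HRaux.alpha_last, HRaux.beta_last]
          have hcast : ((N - cnt Y N : ℕ) : ℤ) = (N:ℤ) - (cnt Y N : ℤ) := by omega
          rw [hcast]
          push_cast
          ring
        · refine Finset.prod_congr rfl ?_
          intro x hxm
          simp only [Finset.mem_filter, Finset.mem_Icc] at hxm
          rw [HRaux.alpha_succ_mem hx hxm.1.2]
          rfl
      rw [hc, e2]
      rcases s with _ | t
      · -- s = 0
        rw [HRaux.D_rec_mem_int_zero X Y hx, IH 0]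
        rw [Finset.sum_range_one, Finset.sum_range_one, hprod 0]
        simp only [Nat.sub_zero, Nat.sub_self, pow_zero, Nat.choose_zero_right,
          Nat.add_zero, Nat.choose_self]
        push_cast
        ring
      · -- s = t+1
        rw [HRaux.D_rec_mem_int_succ X Y hx t, IH (t+1), IH t]
        have e3 : t + 1 + 1 = t + 2 := rfl
        rw [e3]
        have halg := HRaux.alg_mem (N - cnt X N) N t ((cnt Y N : ℕ) : ℤ)
          (fun r => ∏ x ∈ (Finset.Icc 1 N).filter (· ∈ X),
            (1 + (r:ℤ) + (alphaStat X N x : ℤ) + (betaStat Y N x : ℤ)))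
        have hsum2 : ∑ r ∈ Finset.range (t+2),
            (-1:ℤ)^(t+1-r) * ((N - cnt X N + r).choose r : ℤ)
              * (((N+2).choose (t+1-r) : ℕ) : ℤ)
              * ∏ x ∈ (Finset.Icc 1 (N+1)).filter (· ∈ X),
                (1 + (r:ℤ) + (alphaStat X (N+1) x : ℤ) + (betaStat Y (N+1) x : ℤ))
            = ∑ r ∈ Finset.range (t+2),
            (-1:ℤ)^(t+1-r) * ((N - cnt X N + r).choose r : ℤ)
              * (((N+2).choose (t+1-r) : ℕ) : ℤ)
              * ((1 + (r:ℤ) + (N:ℤ) - (cnt Y N : ℤ))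
                * ∏ x ∈ (Finset.Icc 1 N).filter (· ∈ X),
                  (1 + (r:ℤ) + (alphaStat X N x : ℤ) + (betaStat Y N x : ℤ))) := by
          refine Finset.sum_congr rfl ?_
          intro r hr
          rw [hprod r]
        rw [hsum2]
        linear_combination (((N - cnt X N).factorial : ℕ) : ℤ) * halg
    · -- N+1 ∉ X
      have hc' : (N+1) - cnt X (N+1) = (N - cnt X N) + 1 := by
        rw [HRaux.cnt_succ_notmem hx]; omega
      have hprod' : ∀ r : ℕ,
          (∏ x ∈ (Finset.Icc 1 (N+1)).filter (· ∈ X),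
            (1 + (r:ℤ) + (alphaStat X (N+1) x : ℤ) + (betaStat Y (N+1) x : ℤ)))
          = ∏ x ∈ (Finset.Icc 1 N).filter (· ∈ X),
              (1 + ((r+1 : ℕ):ℤ) + (alphaStat X N x : ℤ) + (betaStat Y N x : ℤ)) := by
        intro r
        rw [HRaux.Icc_succ, Finset.filter_insert, if_neg hx]
        refine Finset.prod_congr rfl ?_
        intro x hxm
        simp only [Finset.mem_filter, Finset.mem_Icc] at hxm
        rw [HRaux.alpha_succ_notmem hx hxm.1.2]
        have : betaStat Y (N+1) x = betaStat Y N x := rfl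
        rw [this]
        push_cast
        ring
      rw [hc', e2]
      rw [HRaux.D_rec_notmem_int X Y hx s, IH s, IH (s+1)]
      have e3 : s + 1 + 1 = s + 2 := rfl
      rw [e3]
      have halg := HRaux.alg_notmem (N - cnt X N) N s
        (fun r => ∏ x ∈ (Finset.Icc 1 N).filter (· ∈ X),
          (1 + (r:ℤ) + (alphaStat X N x : ℤ) + (betaStat Y N x : ℤ)))
      have hsum2 : ∑ r ∈ Finset.range (s+1),
          (-1:ℤ)^(s-r) * (((N - cnt X N + 1) + r).choose r : ℤ)
            * (((N+2).choose (s-r) : ℕ) : ℤ)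
            * ∏ x ∈ (Finset.Icc 1 (N+1)).filter (· ∈ X),
              (1 + (r:ℤ) + (alphaStat X (N+1) x : ℤ) + (betaStat Y (N+1) x : ℤ))
          = ∑ r ∈ Finset.range (s+1),
          (-1:ℤ)^(s-r) * (((N - cnt X N) + 1 + r).choose r : ℤ)
            * (((N+2).choose (s-r) : ℕ) : ℤ)
            * ∏ x ∈ (Finset.Icc 1 N).filter (· ∈ X),
              (1 + ((r+1 : ℕ):ℤ) + (alphaStat X N x : ℤ) + (betaStat Y N x : ℤ)) := by
        refine Finset.sum_congr rfl ?_
        intro r hr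
        rw [hprod' r]
      rw [hsum2, Nat.factorial_succ]
      push_cast at halg ⊢
      linear_combination (((N - cnt X N).factorial : ℕ) : ℤ) * halg
end

section
/- For all subsets X, Y of the positive integers and all integers n ≥ 1 and s ≥ 0, the number D_{n,s}^{X,Y} of permutations of [n] with exactly s (X,Y)-descents satisfies D_{n,s}^{X,Y} = (x_n^c)! · Σ_{r=0}^{x_n − s} (−1)^{x_n − s − r} · C(x_n^c + r, r) · C(n+1, x_n − s − r) · Π_{x ∈ X∩[n]} (r + β_{X,n,x} − β_{Y,n,x}). -/
open scoped Classical

namespace HR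
def pd (X Y : Set ℕ) (a b : ℕ) : Prop := b < a ∧ a ∈ X ∧ b ∈ Y
noncomputable def desL (X Y : Set ℕ) : List ℕ → ℕ
  | [] => 0
  | [_] => 0
  | a :: b :: l => (if pd X Y a b then 1 else 0) + desL X Y (b :: l)
variable (X Y : Set ℕ)
@[simp] lemma desL_nil : desL X Y [] = 0 := rfl
@[simp] lemma desL_single (a : ℕ) : desL X Y [a] = 0 := rfl
@[simp] lemma desL_cons2 (a b : ℕ) (l : List ℕ) :
    desL X Y (a :: b :: l) = (if pd X Y a b then 1 else 0) + desL X Y (b :: l) := rfl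
lemma desL_cons (a : ℕ) (w : List ℕ) :
    desL X Y (a :: w) = (if w ≠ [] ∧ pd X Y a (w.getD 0 0) then 1 else 0) + desL X Y w := by
  cases w with
  | nil => simp
  | cons b t => simp [desL]

def Gc (X Y : Set ℕ) (l : List ℕ) (k : ℕ) : Prop :=
  k ≠ 0 ∧ k < l.length ∧ pd X Y (l.getD (k-1) 0) (l.getD k 0)
def Hc (X : Set ℕ) (Y : Set ℕ) (M : ℕ) (l : List ℕ) (k : ℕ) : Prop :=
  k < l.length ∧ M ∈ X ∧ l.getD k 0 ∈ Y

lemma desL_insertIdx (M : ℕ) :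
    ∀ (k : ℕ) (l : List ℕ), k ≤ l.length → (∀ x ∈ l, x < M) →
    desL X Y (l.insertIdx k M) + (if Gc X Y l k then 1 else 0)
      = desL X Y l + (if Hc X Y M l k then 1 else 0) := by
  intro k
  induction k with
  | zero =>
    intro l _ hx
    cases l with
    | nil => simp [Gc, Hc]
    | cons b t =>
      have hb : b < M := hx b (by simp)
      simp only [List.insertIdx_zero, desL_cons2, Gc, Hc]
      have : pd X Y M b ↔ (M ∈ X ∧ b ∈ Y) := by
        constructor
        · rintro ⟨_, h2, h3⟩; exact ⟨h2, h3⟩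
        · rintro ⟨h2, h3⟩; exact ⟨hb, h2, h3⟩
      split_ifs with h1 h2 h3 h4 h5 <;> simp_all <;> omega
  | succ k IH =>
    intro l hk hx
    cases l with
    | nil => simp at hk
    | cons a t =>
      have hk' : k ≤ t.length := by simpa using hk
      have hxt : ∀ x ∈ t, x < M := fun x hx' => hx x (by simp [hx'])
      have IH' := IH t hk' hxt
      rw [List.insertIdx_succ_cons]
      rw [desL_cons X Y a (t.insertIdx k M), desL_cons X Y a t]
      -- claim: head terms + G terms match
      have CL : (if (t.insertIdx k M ≠ [] ∧ pd X Y a ((t.insertIdx k M).getD 0 0)) then 1 else 0)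
            + (if Gc X Y (a :: t) (k+1) then 1 else 0)
          = (if (t ≠ [] ∧ pd X Y a (t.getD 0 0)) then 1 else 0)
            + (if Gc X Y t k then 1 else 0) := by
        cases t with
        | nil =>
          have hk0 : k = 0 := by simpa using hk'
          subst hk0
          have : ¬ pd X Y a M := by
            rintro ⟨h1, -⟩; exact absurd (hx a (by simp)) (by omega)
          simp [Gc, this]
        | cons b u =>
          cases k with
          | zero =>
            have : ¬ pd X Y a M := by
              rintro ⟨h1, -⟩; exact absurd (hx a (by simp)) (by omega)
            simp only [List.insertIdx_zero, Gc]
            simp only [List.getD_cons_zero, List.getD_cons_succ, List.length_cons]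
            have h2 : ¬ ((M :: b :: u) ≠ [] ∧ pd X Y a M) := by tauto
            rw [if_neg h2]
            have h3 : (0:ℕ) ≠ 0 → False := by omega
            split_ifs <;> simp_all <;> omega
          | succ k' =>
            have hk'' : k' ≤ u.length := by simpa using hk'
            rw [List.insertIdx_succ_cons]
            have hGiff : Gc X Y (a :: b :: u) (k'+1+1) ↔ Gc X Y (b :: u) (k'+1) := by
              unfold Gc
              have g1 : (a :: b :: u).getD (k'+1+1-1) 0 = (b :: u).getD (k'+1-1) 0 := by
                simp
              have g2 : (a :: b :: u).getD (k'+1+1) 0 = (b :: u).getD (k'+1) 0 := by simp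
              rw [g1, g2]
              simp only [List.length_cons]
              constructor
              · rintro ⟨h1, h2, h3⟩; exact ⟨by omega, by omega, h3⟩
              · rintro ⟨h1, h2, h3⟩; exact ⟨by omega, by omega, h3⟩
            have hh : ((b :: List.insertIdx u k' M) ≠ [] ∧
                pd X Y a ((b :: List.insertIdx u k' M).getD 0 0)) ↔
                ((b :: u) ≠ [] ∧ pd X Y a ((b :: u).getD 0 0)) := by
              simp
            rw [if_congr hGiff rfl rfl, if_congr hh rfl rfl]
      have hH : (if Hc X Y M (a::t) (k+1) then 1 else 0) = (if Hc X Y M t k then 1 else 0) := by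
        have hiff : Hc X Y M (a::t) (k+1) ↔ Hc X Y M t k := by
          unfold Hc
          simp only [List.length_cons, List.getD_cons_succ]
          constructor
          · rintro ⟨h1, h2, h3⟩; exact ⟨by omega, h2, h3⟩
          · rintro ⟨h1, h2, h3⟩; exact ⟨by omega, h2, h3⟩
        rw [hiff]
      omega

lemma helper (m : ℕ) (Q : ℕ → Prop) :
    ((Finset.range (m+1)).filter Q).card
      = (if Q 0 then 1 else 0) + ((Finset.range m).filter (fun i => Q (i+1))).card := by
  rw [Finset.card_filter, Finset.card_filter, Finset.sum_range_succ']
  ring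

lemma desL_eq_card (l : List ℕ) :
    desL X Y l = ((Finset.range (l.length - 1)).filter
      (fun i => pd X Y (l.getD i 0) (l.getD (i+1) 0))).card := by
  induction l with
  | nil => simp
  | cons a t ih =>
    cases t with
    | nil => simp
    | cons b u =>
      rw [desL_cons2, ih]
      simp only [List.length_cons, Nat.add_sub_cancel]
      rw [helper]
      congr 1

lemma countP_eq_card (A : Set ℕ) (l : List ℕ) :
    l.countP (fun x => decide (x ∈ A))
      = ((Finset.range l.length).filter (fun i => l.getD i 0 ∈ A)).card := by
  induction l with
  | nil => simp
  | cons a t ih =>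
    rw [List.countP_cons, ih]
    simp only [List.length_cons]
    rw [helper]
    simp only [List.getD_cons_zero, List.getD_cons_succ]
    by_cases h : a ∈ A <;> simp [h, add_comm]

lemma desL_le_countX (l : List ℕ) : desL X Y l ≤ l.countP (fun x => decide (x ∈ X)) := by
  rw [desL_eq_card, countP_eq_card]
  apply Finset.card_le_card
  intro i hi
  simp only [Finset.mem_filter, Finset.mem_range] at hi ⊢
  exact ⟨by omega, hi.2.2.1⟩

lemma desL_le_countY (l : List ℕ) : desL X Y l ≤ l.countP (fun x => decide (x ∈ Y)) := by
  rw [desL_eq_card, countP_eq_card]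
  apply Finset.card_le_card_of_injOn (fun i => i + 1)
  · intro i hi
    simp only [Finset.mem_coe, Finset.mem_filter, Finset.mem_range] at hi ⊢
    exact ⟨by omega, hi.2.2.2⟩
  · intro i _ j _ h; simpa using h

lemma countG (l : List ℕ) :
    ((Finset.range (l.length+1)).filter (fun k => Gc X Y l k)).card = desL X Y l := by
  rw [helper]
  have h0 : ¬ Gc X Y l 0 := by rintro ⟨h, -⟩; exact h rfl
  rw [if_neg h0, desL_eq_card]
  have : (Finset.range l.length).filter (fun i => Gc X Y l (i+1))
      = (Finset.range (l.length - 1)).filter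
        (fun i => pd X Y (l.getD i 0) (l.getD (i+1) 0)) := by
    ext i
    simp only [Finset.mem_filter, Finset.mem_range, Gc, ne_eq, Nat.add_sub_cancel]
    constructor
    · rintro ⟨h1, h2, h3, h4⟩; exact ⟨by omega, h4⟩
    · rintro ⟨h1, h2⟩; exact ⟨by omega, by omega, by omega, h2⟩
  rw [this]
  omega

lemma countH (M : ℕ) (hM : M ∈ X) (l : List ℕ) :
    ((Finset.range (l.length+1)).filter (fun k => Hc X Y M l k)).card
      = l.countP (fun x => decide (x ∈ Y)) := by
  rw [countP_eq_card]
  congr 1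
  ext k
  simp only [Finset.mem_filter, Finset.mem_range]
  simp only [Hc]
  constructor
  · rintro ⟨h1, h2, h3, h4⟩; exact ⟨h2, h4⟩
  · rintro ⟨h1, h2⟩; exact ⟨by omega, h1, hM, h2⟩

lemma cardGH (M : ℕ) (hM : M ∈ X) (l : List ℕ) :
    ((Finset.range (l.length+1)).filter (fun k => Hc X Y M l k ∧ ¬ Gc X Y l k)).card
      = l.countP (fun x => decide (x ∈ Y)) - desL X Y l := by
  have hsub : (Finset.range (l.length+1)).filter (fun k => Gc X Y l k)
      ⊆ (Finset.range (l.length+1)).filter (fun k => Hc X Y M l k) := by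
    intro k hk
    simp only [Finset.mem_filter] at hk ⊢
    simp only [Gc, Hc] at hk ⊢
    exact ⟨hk.1, by omega, hM, hk.2.2.2.2.2⟩
  have heq : (Finset.range (l.length+1)).filter (fun k => Hc X Y M l k ∧ ¬ Gc X Y l k)
      = (Finset.range (l.length+1)).filter (fun k => Hc X Y M l k)
        \ (Finset.range (l.length+1)).filter (fun k => Gc X Y l k) := by
    ext k
    simp only [Finset.mem_filter, Finset.mem_sdiff]
    tauto
  rw [heq, Finset.card_sdiff_of_subset hsub, countH X Y M hM, countG]

/-- counting insert positions, case `M ∉ X` -/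
lemma CK1 (M : ℕ) (hM : M ∉ X) (l : List ℕ) (hx : ∀ x ∈ l, x < M) (s : ℕ) :
    ((Finset.range (l.length+1)).filter
        (fun k => desL X Y (l.insertIdx k M) = s)).card
      = if desL X Y l = s then l.length + 1 - s
        else if desL X Y l = s + 1 then s + 1 else 0 := by
  have key : ∀ k ∈ Finset.range (l.length+1),
      (desL X Y (l.insertIdx k M) = s ↔
        ((Gc X Y l k ∧ desL X Y l = s + 1) ∨ (¬ Gc X Y l k ∧ desL X Y l = s))) := by
    intro k hk
    have hk' : k ≤ l.length := by simpa [Nat.lt_succ_iff] using hk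
    have h := desL_insertIdx X Y M k l hk' hx
    have hH : ¬ Hc X Y M l k := by rintro ⟨-, h2, -⟩; exact hM h2
    rw [if_neg hH] at h
    by_cases hG : Gc X Y l k
    · rw [if_pos hG] at h
      constructor
      · intro he; exact Or.inl ⟨hG, by omega⟩
      · rintro (⟨-, h2⟩ | ⟨h1, -⟩); omega; exact absurd hG h1
    · rw [if_neg hG] at h
      constructor
      · intro he; exact Or.inr ⟨hG, by omega⟩
      · rintro (⟨h1, -⟩ | ⟨-, h2⟩); exact absurd h1 hG; omega
  rw [Finset.filter_congr key]
  by_cases h1 : desL X Y l = s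
  · have h2 : desL X Y l ≠ s + 1 := by omega
    rw [if_pos h1]
    have : (Finset.range (l.length+1)).filter
        (fun k => (Gc X Y l k ∧ desL X Y l = s + 1) ∨ (¬ Gc X Y l k ∧ desL X Y l = s))
        = (Finset.range (l.length+1)).filter (fun k => ¬ Gc X Y l k) := by
      apply Finset.filter_congr; intro k _; simp [h1, h2]
    rw [this]
    have hcompl := Finset.card_filter_add_card_filter_not
      (s := Finset.range (l.length+1)) (p := fun k => Gc X Y l k)
    have hG := countG X Y l
    have hcard : (Finset.range (l.length+1)).card = l.length + 1 := Finset.card_range _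
    omega
  · rw [if_neg h1]
    by_cases h2 : desL X Y l = s + 1
    · rw [if_pos h2]
      have : (Finset.range (l.length+1)).filter
          (fun k => (Gc X Y l k ∧ desL X Y l = s + 1) ∨ (¬ Gc X Y l k ∧ desL X Y l = s))
          = (Finset.range (l.length+1)).filter (fun k => Gc X Y l k) := by
        apply Finset.filter_congr; intro k _; simp [h1, h2]
      rw [this, countG]; omega
    · rw [if_neg h2]
      rw [Finset.card_eq_zero, Finset.filter_eq_empty_iff]
      intro k _
      simp [h1, h2]

/-- counting insert positions, case `M ∈ X` -/
lemma CK2 (M : ℕ) (hM : M ∈ X) (l : List ℕ) (hx : ∀ x ∈ l, x < M) (s : ℕ) :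
    ((Finset.range (l.length+1)).filter
        (fun k => desL X Y (l.insertIdx k M) = s)).card
      = if desL X Y l = s then
          l.length + 1 - (l.countP (fun x => decide (x ∈ Y)) - s)
        else if desL X Y l + 1 = s then
          l.countP (fun x => decide (x ∈ Y)) - desL X Y l
        else 0 := by
  have hGH : ∀ k, Gc X Y l k → Hc X Y M l k := by
    intro k hk
    obtain ⟨h1, h2, h3⟩ := hk
    exact ⟨h2, hM, h3.2.2⟩
  have key : ∀ k ∈ Finset.range (l.length+1),
      (desL X Y (l.insertIdx k M) = s ↔
        (((Hc X Y M l k ∧ ¬ Gc X Y l k) ∧ desL X Y l + 1 = s)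
          ∨ (¬ (Hc X Y M l k ∧ ¬ Gc X Y l k) ∧ desL X Y l = s))) := by
    intro k hk
    have hk' : k ≤ l.length := by simpa [Nat.lt_succ_iff] using hk
    have h := desL_insertIdx X Y M k l hk' hx
    by_cases hG : Gc X Y l k
    · have hH : Hc X Y M l k := hGH k hG
      rw [if_pos hG, if_pos hH] at h
      constructor
      · intro he; exact Or.inr ⟨by tauto, by omega⟩
      · rintro (⟨⟨-, h2⟩, -⟩ | ⟨-, h2⟩); exact absurd hG h2; omega
    · rw [if_neg hG] at h
      by_cases hH : Hc X Y M l k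
      · rw [if_pos hH] at h
        constructor
        · intro he; exact Or.inl ⟨⟨hH, hG⟩, by omega⟩
        · rintro (⟨-, h2⟩ | ⟨h1, -⟩); omega; exact absurd ⟨hH, hG⟩ h1
      · rw [if_neg hH] at h
        constructor
        · intro he; exact Or.inr ⟨by tauto, by omega⟩
        · rintro (⟨⟨h1, -⟩, -⟩ | ⟨-, h2⟩); exact absurd h1 hH; omega
  rw [Finset.filter_congr key]
  have hcGH := cardGH X Y M hM l
  have hle : desL X Y l ≤ l.countP (fun x => decide (x ∈ Y)) := desL_le_countY X Y l
  by_cases h1 : desL X Y l = s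
  · have h2 : desL X Y l + 1 ≠ s := by omega
    rw [if_pos h1]
    have : (Finset.range (l.length+1)).filter
        (fun k => (((Hc X Y M l k ∧ ¬ Gc X Y l k) ∧ desL X Y l + 1 = s)
          ∨ (¬ (Hc X Y M l k ∧ ¬ Gc X Y l k) ∧ desL X Y l = s)))
        = (Finset.range (l.length+1)).filter
            (fun k => ¬ (Hc X Y M l k ∧ ¬ Gc X Y l k)) := by
      apply Finset.filter_congr; intro k _; simp [h1, h2]
    rw [this]
    have hcompl := Finset.card_filter_add_card_filter_not
      (s := Finset.range (l.length+1)) (p := fun k => Hc X Y M l k ∧ ¬ Gc X Y l k)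
    have hcard : (Finset.range (l.length+1)).card = l.length + 1 := Finset.card_range _
    omega
  · rw [if_neg h1]
    by_cases h2 : desL X Y l + 1 = s
    · rw [if_pos h2]
      have : (Finset.range (l.length+1)).filter
          (fun k => (((Hc X Y M l k ∧ ¬ Gc X Y l k) ∧ desL X Y l + 1 = s)
            ∨ (¬ (Hc X Y M l k ∧ ¬ Gc X Y l k) ∧ desL X Y l = s)))
          = (Finset.range (l.length+1)).filter
              (fun k => Hc X Y M l k ∧ ¬ Gc X Y l k) := by
        apply Finset.filter_congr; intro k _; simp [h1, h2]
      rw [this, hcGH]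
    · rw [if_neg h2]
      rw [Finset.card_eq_zero, Finset.filter_eq_empty_iff]
      intro k _
      simp [h1, h2]

/-- the finset of permutation lists of `[1..n]` -/
noncomputable def permsL (n : ℕ) : Finset (List ℕ) := (List.range' 1 n).permutations.toFinset

lemma mem_permsL {n : ℕ} {l : List ℕ} : l ∈ permsL n ↔ l.Perm (List.range' 1 n) := by
  rw [permsL, List.mem_toFinset, List.mem_permutations]

/-- number of permutation lists with `s` descents -/
noncomputable def Dl (X Y : Set ℕ) (n s : ℕ) : ℕ :=
  ((permsL n).filter (fun l => desL X Y l = s)).card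

lemma range'_succ_concat (n : ℕ) : List.range' 1 (n+1) = List.range' 1 n ++ [n+1] := by
  rw [List.range'_concat, Nat.one_mul, Nat.add_comm]

lemma not_mem_range' (n : ℕ) : (n+1) ∉ List.range' 1 n := by
  intro h
  rw [List.mem_range'_1] at h
  omega

lemma erase_roundtrip (M : ℕ) : ∀ (k : ℕ) (l : List ℕ), k ≤ l.length → M ∉ l →
    (l.insertIdx k M).erase M = l ∧ (l.insertIdx k M).idxOf M = k := by
  intro k
  induction k with
  | zero =>
    intro l _ _
    simp [List.insertIdx_zero]
  | succ k IH =>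
    intro l hk hM
    cases l with
    | nil => simp at hk
    | cons a t =>
      have ha : a ≠ M := fun h => hM (by simp [h])
      have hM' : M ∉ t := fun h => hM (by simp [h])
      have hk' : k ≤ t.length := by simpa using hk
      obtain ⟨ih1, ih2⟩ := IH t hk' hM'
      rw [List.insertIdx_succ_cons]
      constructor
      · rw [List.erase_cons_tail (by simp [ha]), ih1]
      · rw [List.idxOf_cons_ne _ (by simpa using ha), ih2]

lemma insert_erase_roundtrip (M : ℕ) : ∀ (l : List ℕ), M ∈ l →
    (l.erase M).insertIdx (l.idxOf M) M = l := by
  intro l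
  induction l with
  | nil => simp
  | cons a t IH =>
    intro hM
    by_cases ha : a = M
    · subst ha
      simp [List.erase_cons_head, List.idxOf_cons_self]
    · have hMt : M ∈ t := by
        rcases List.mem_cons.mp hM with h | h
        · exact absurd h.symm ha
        · exact h
      rw [List.erase_cons_tail (by simpa using ha),
        List.idxOf_cons_ne _ (by simpa using ha), List.insertIdx_succ_cons, IH hMt]

lemma mem_of_mem_permsL {n : ℕ} {l : List ℕ} (h : l ∈ permsL n) {x : ℕ} (hx : x ∈ l) :
    1 ≤ x ∧ x ≤ n := by
  rw [mem_permsL] at h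
  have := h.mem_iff.mp hx
  rw [List.mem_range'_1] at this
  omega

lemma length_of_mem_permsL {n : ℕ} {l : List ℕ} (h : l ∈ permsL n) : l.length = n := by
  rw [mem_permsL] at h
  simpa using h.length_eq

/-- the master sum decomposition -/
lemma SUM (n s : ℕ) :
    Dl X Y (n+1) s = ∑ l ∈ permsL n,
      ((Finset.range (n+1)).filter
        (fun k => desL X Y (l.insertIdx k (n+1)) = s)).card := by
  rw [Dl, ← Finset.card_sigma]
  apply Finset.card_bij'
    (i := fun l (_ : l ∈ (permsL (n+1)).filter (fun l => desL X Y l = s)) =>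
      (⟨l.erase (n+1), l.idxOf (n+1)⟩ : Σ _ : List ℕ, ℕ))
    (j := fun p _ => p.1.insertIdx p.2 (n+1))
  · intro l hl
    simp only [Finset.mem_filter] at hl
    obtain ⟨hl1, hdes⟩ := hl
    have hperm := mem_permsL |>.mp hl1
    have hmem : (n+1) ∈ l := hperm.mem_iff.mpr (by rw [range'_succ_concat]; simp)
    have herase : (l.erase (n+1)).Perm (List.range' 1 n) := by
      have h1 : (l.erase (n+1)).Perm ((List.range' 1 (n+1)).erase (n+1)) := hperm.erase _
      rwa [range'_succ_concat, List.erase_append_right _ (not_mem_range' n),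
        List.erase_cons_head, List.append_nil] at h1
    simp only [Finset.mem_sigma, Finset.mem_filter, Finset.mem_range]
    refine ⟨mem_permsL |>.mpr herase, ?_, ?_⟩
    · have h1 : l.idxOf (n+1) < l.length := List.idxOf_lt_length_iff.mpr hmem
      have h2 : l.length = n + 1 := by simpa using hperm.length_eq
      omega
    · rw [insert_erase_roundtrip _ _ hmem]
      exact hdes
  · rintro ⟨l, k⟩ hp
    simp only [Finset.mem_sigma, Finset.mem_filter, Finset.mem_range] at hp
    obtain ⟨hl, hk, hdes⟩ := hp
    simp only [Finset.mem_filter]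
    have hlen : l.length = n := length_of_mem_permsL hl
    constructor
    · rw [mem_permsL]
      have h1 : (l.insertIdx k (n+1)).Perm ((n+1) :: l) :=
        List.perm_insertIdx _ _ (by omega)
      have h2 : ((n+1) :: l).Perm ((n+1) :: List.range' 1 n) :=
        (mem_permsL |>.mp hl).cons _
      have h3 : ((n+1) :: List.range' 1 n).Perm (List.range' 1 (n+1)) := by
        rw [range'_succ_concat]
        exact (List.perm_append_singleton _ _).symm
      exact (h1.trans h2).trans h3
    · exact hdes
  · intro l hl
    simp only [Finset.mem_filter] at hl
    have hperm := mem_permsL |>.mp hl.1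
    have hmem : (n+1) ∈ l := hperm.mem_iff.mpr (by rw [range'_succ_concat]; simp)
    simp [insert_erase_roundtrip _ _ hmem]
  · rintro ⟨l, k⟩ hp
    simp only [Finset.mem_sigma, Finset.mem_filter, Finset.mem_range] at hp
    obtain ⟨hl, hk, -⟩ := hp
    have hlen : l.length = n := length_of_mem_permsL hl
    have hM : (n+1) ∉ l := by
      intro h
      have := mem_of_mem_permsL hl h
      omega
    obtain ⟨h1, h2⟩ := erase_roundtrip (n+1) k l (by omega) hM
    simp [h1, h2]

lemma countP_of_mem_permsL {A : Set ℕ} {n : ℕ} {l : List ℕ} (h : l ∈ permsL n) :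
    l.countP (fun x => decide (x ∈ A)) = (List.range' 1 n).countP (fun x => decide (x ∈ A)) :=
  List.Perm.countP_eq _ (mem_permsL.mp h)

lemma Dl_eq_zero {n s : ℕ}
    (h : (List.range' 1 n).countP (fun x => decide (x ∈ X)) < s) : Dl X Y n s = 0 := by
  rw [Dl, Finset.card_eq_zero, Finset.filter_eq_empty_iff]
  intro l hl
  have h1 := desL_le_countX X Y l
  rw [countP_of_mem_permsL hl] at h1
  omega

lemma sum_ite_card {α : Type*} (t : Finset α) (p : α → Prop) [DecidablePred p] (c : ℤ) :
    (∑ x ∈ t, if p x then c else 0) = (t.filter p).card * c := by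
  rw [← Finset.sum_filter, Finset.sum_const, nsmul_eq_mul]

lemma REC1 (n s : ℕ) (hM : (n+1) ∉ X) :
    (Dl X Y (n+1) s : ℤ)
      = ((n:ℤ) + 1 - s) * Dl X Y n s + ((s:ℤ) + 1) * Dl X Y n (s+1) := by
  by_cases hs : s ≤ n + 1
  · rw [SUM]
    push_cast
    have key : ∀ l ∈ permsL n,
        ((((Finset.range (n+1)).filter
          (fun k => desL X Y (l.insertIdx k (n+1)) = s)).card : ℤ))
        = (if desL X Y l = s then ((n:ℤ)+1-s) else 0)
          + (if desL X Y l = s + 1 then ((s:ℤ)+1) else 0) := by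
      intro l hl
      have hlen : l.length = n := length_of_mem_permsL hl
      have hx : ∀ x ∈ l, x < n + 1 := fun x hx => by
        have := mem_of_mem_permsL hl hx; omega
      have hck := CK1 X Y (n+1) hM l hx s
      rw [hlen] at hck
      rw [hck]
      have hds : desL X Y l ≤ l.countP (fun x => decide (x ∈ X)) := desL_le_countX X Y l
      have hcl : l.countP (fun x => decide (x ∈ X)) ≤ l.length := List.countP_le_length
      split_ifs <;> omega
    rw [Finset.sum_congr rfl key, Finset.sum_add_distrib, sum_ite_card, sum_ite_card]
    simp only [Dl, Finset.filter_congr_decidable]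
    push_cast
    ring
  · -- s > n+1 : everything vanishes
    have h1 : Dl X Y (n+1) s = 0 := by
      apply Dl_eq_zero
      have := List.countP_le_length (l := List.range' 1 (n+1))
        (p := fun x => decide (x ∈ X))
      simp only [List.length_range'] at this
      omega
    have h2 : Dl X Y n s = 0 := by
      apply Dl_eq_zero
      have := List.countP_le_length (l := List.range' 1 n) (p := fun x => decide (x ∈ X))
      simp only [List.length_range'] at this
      omega
    have h3 : Dl X Y n (s+1) = 0 := by
      apply Dl_eq_zero
      have := List.countP_le_length (l := List.range' 1 n) (p := fun x => decide (x ∈ X))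
      simp only [List.length_range'] at this
      omega
    rw [h1, h2, h3]
    ring

lemma REC2 (n s : ℕ) (hM : (n+1) ∈ X) :
    (Dl X Y (n+1) s : ℤ)
      = ((n:ℤ) + 1 - ((List.range' 1 n).countP (fun x => decide (x ∈ Y)) : ℤ) + s)
          * Dl X Y n s
        + (((List.range' 1 n).countP (fun x => decide (x ∈ Y)) : ℤ) - s + 1)
          * (if s = 0 then 0 else (Dl X Y n (s-1) : ℤ)) := by
  set yn := (List.range' 1 n).countP (fun x => decide (x ∈ Y)) with hyn
  have hynn : yn ≤ n := by
    have := List.countP_le_length (l := List.range' 1 n) (p := fun x => decide (x ∈ Y))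
    simpa using this
  rw [SUM]
  push_cast
  have key : ∀ l ∈ permsL n,
      ((((Finset.range (n+1)).filter
        (fun k => desL X Y (l.insertIdx k (n+1)) = s)).card : ℤ))
      = (if desL X Y l = s then ((n:ℤ)+1-yn+s) else 0)
        + (if desL X Y l + 1 = s then ((yn:ℤ)-s+1) else 0) := by
    intro l hl
    have hlen : l.length = n := length_of_mem_permsL hl
    have hx : ∀ x ∈ l, x < n + 1 := fun x hx => by
      have := mem_of_mem_permsL hl hx; omega
    have hck := CK2 X Y (n+1) hM l hx s
    rw [hlen] at hck
    rw [hck]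
    have hcount : l.countP (fun x => decide (x ∈ Y)) = yn := countP_of_mem_permsL hl
    have hds : desL X Y l ≤ l.countP (fun x => decide (x ∈ Y)) := desL_le_countY X Y l
    rw [hcount] at hds ⊢
    split_ifs <;> omega
  rw [Finset.sum_congr rfl key, Finset.sum_add_distrib, sum_ite_card, sum_ite_card]
  have h2 : (((permsL n).filter (fun l => desL X Y l + 1 = s)).card : ℤ)
      = (if s = 0 then 0 else (Dl X Y n (s-1) : ℤ)) := by
    cases s with
    | zero =>
      simp
    | succ s' =>
      simp only [Nat.succ_ne_zero, if_false, Nat.add_sub_cancel]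
      rw [Dl]
      norm_cast
      apply Finset.card_bij (fun l _ => l) <;> simp only [Finset.mem_filter]
      · intro l hl
        exact ⟨hl.1, by omega⟩
      · intro l l' _ _ h; exact h
      · intro l hl
        exact ⟨l, ⟨hl.1, by omega⟩, rfl⟩
  rw [h2]
  simp only [Dl, Finset.filter_congr_decidable]
  ring

noncomputable def toList {n : ℕ} (σ : Equiv.Perm (Fin n)) : List ℕ :=
  List.ofFn (fun i : Fin n => (σ i : ℕ) + 1)

lemma toList_length {n : ℕ} (σ : Equiv.Perm (Fin n)) : (toList σ).length = n := by
  simp [toList]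

lemma toList_getD {n : ℕ} (σ : Equiv.Perm (Fin n)) {i : ℕ} (h : i < n) :
    (toList σ).getD i 0 = (σ ⟨i, h⟩ : ℕ) + 1 := by
  have h2 : i < (toList σ).length := by simp [toList, h]
  rw [List.getD_eq_getElem _ _ h2]
  simp only [toList]
  rw [List.getElem_ofFn]

lemma toList_mem_permsL {n : ℕ} (σ : Equiv.Perm (Fin n)) : toList σ ∈ permsL n := by
  rw [mem_permsL]
  apply List.perm_of_nodup_nodup_toFinset_eq
  · rw [show toList σ = List.ofFn (fun i : Fin n => (σ i : ℕ) + 1) from rfl, List.nodup_ofFn]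
    intro i j hij
    have hij' : (σ i : ℕ) + 1 = (σ j : ℕ) + 1 := hij
    exact σ.injective (Fin.ext (by omega))
  · exact List.nodup_range' (s := 1) (n := n)
  · ext x
    simp only [List.mem_toFinset, toList, List.mem_ofFn, Set.mem_range, List.mem_range'_1]
    constructor
    · rintro ⟨i, rfl⟩
      have := (σ i).isLt
      omega
    · rintro ⟨h1, h2⟩
      refine ⟨σ.symm ⟨x - 1, by omega⟩, ?_⟩
      rw [Equiv.apply_symm_apply]
      simp
      omega

lemma desCount_eq_desL {n : ℕ} (σ : Equiv.Perm (Fin n)) :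
    desCount X Y n σ = desL X Y (toList σ) := by
  rw [desCount, Set.ncard_eq_toFinset_card', Set.toFinset_setOf, desL_eq_card,
    toList_length]
  refine Finset.card_bij (fun (i : Fin n) _ => (i : ℕ)) ?_ ?_ ?_
  · intro i hi
    simp only [Finset.mem_filter, Finset.mem_univ, true_and] at hi
    obtain ⟨h, h1, h2, h3⟩ := hi
    simp only [Finset.mem_filter, Finset.mem_range]
    have hi1 : (i : ℕ) < n := i.isLt
    refine ⟨by omega, ?_⟩
    rw [toList_getD σ (show (i:ℕ) < n by omega), toList_getD σ h]
    simp only [Fin.eta]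
    exact ⟨by omega, h2, h3⟩
  · intro i _ j _ hij
    exact Fin.ext hij
  · intro j hj
    simp only [Finset.mem_filter, Finset.mem_range] at hj
    obtain ⟨hj1, hj2⟩ := hj
    have hjn : j < n := by omega
    refine ⟨⟨j, hjn⟩, ?_, rfl⟩
    simp only [Finset.mem_filter, Finset.mem_univ, true_and]
    rw [toList_getD σ hjn, toList_getD σ (show j + 1 < n by omega)] at hj2
    obtain ⟨h1, h2, h3⟩ := hj2
    exact ⟨by omega, by omega, h2, h3⟩

lemma D_eq_Dl (n s : ℕ) : D X Y n s = Dl X Y n s := by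
  rw [D, Nat.card_coe_set_eq, Set.ncard_eq_toFinset_card', Set.toFinset_setOf, Dl]
  refine Finset.card_bij (fun σ _ => toList σ) ?_ ?_ ?_
  · intro σ hσ
    simp only [Finset.mem_filter, Finset.mem_univ, true_and] at hσ
    simp only [Finset.mem_filter]
    exact ⟨toList_mem_permsL σ, by rw [← desCount_eq_desL, hσ]⟩
  · intro σ _ τ _ h
    simp only [toList] at h
    have h2 := List.ofFn_injective h
    ext i
    have h3 : (σ i : ℕ) + 1 = (τ i : ℕ) + 1 := congrFun h2 i
    omega
  · intro l hl
    simp only [Finset.mem_filter] at hl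
    obtain ⟨hl1, hl2⟩ := hl
    have hperm := mem_permsL.mp hl1
    have hlen : l.length = n := by simpa using hperm.length_eq
    have hnodup : l.Nodup := hperm.nodup_iff.mpr (List.nodup_range' (s := 1) (n := n))
    have hmem : ∀ i : Fin n, 1 ≤ l[(i:ℕ)]'(by omega) ∧ l[(i:ℕ)]'(by omega) ≤ n := by
      intro i
      have h1 : l[(i:ℕ)]'(by omega) ∈ l := List.getElem_mem _
      have := hperm.mem_iff.mp h1
      rw [List.mem_range'_1] at this
      omega
    have hf : ∀ i : Fin n, l[(i:ℕ)]'(by omega) - 1 < n := fun i => by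
      have := hmem i; omega
    set f : Fin n → Fin n := fun i => ⟨l[(i:ℕ)]'(by omega) - 1, hf i⟩ with hfdef
    have hinj : Function.Injective f := by
      intro i j hij
      have h1 := hmem i
      have h2 := hmem j
      have h3 : l[(i:ℕ)]'(by omega) = l[(j:ℕ)]'(by omega) := by
        have := congrArg Fin.val hij
        simp only [hfdef] at this
        omega
      rw [hnodup.getElem_inj_iff] at h3
      exact Fin.ext h3
    have hbij : Function.Bijective f := Finite.injective_iff_bijective.mp hinj
    refine ⟨Equiv.ofBijective f hbij, Finset.mem_filter.mpr ⟨Finset.mem_univ _, ?_⟩, ?_⟩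
    · rw [desCount_eq_desL]
      have : toList (Equiv.ofBijective f hbij) = l := by
        apply List.ext_getElem (by simp [toList, hlen])
        intro i h1 h2
        simp only [toList]
        rw [List.getElem_ofFn]
        simp only [Equiv.ofBijective_apply, hfdef]
        have := hmem ⟨i, by simpa [toList] using h1⟩
        simp only at this ⊢
        omega
      rw [this]
      exact hl2
    · apply List.ext_getElem (by simp [toList, hlen])
      intro i h1 h2
      simp only [toList]
      rw [List.getElem_ofFn]
      simp only [Equiv.ofBijective_apply, hfdef]
      have := hmem ⟨i, by simpa [toList] using h1⟩
      simp only at this ⊢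
      omega

/-! ### counting lemmas for `cnt` and `betaStat` -/

lemma Icc_succ (n : ℕ) : Finset.Icc 1 (n+1) = insert (n+1) (Finset.Icc 1 n) := by
  ext x; simp [Finset.mem_Icc, Finset.mem_insert]; omega

lemma cnt_eq (A : Set ℕ) (n : ℕ) : cnt A n = ((Finset.Icc 1 n).filter (· ∈ A)).card := by
  rw [cnt]
  have : A ∩ Set.Icc 1 n = ↑((Finset.Icc 1 n).filter (· ∈ A)) := by
    ext x
    simp only [Set.mem_inter_iff, Set.mem_Icc, Finset.coe_filter, Set.mem_setOf_eq,
      Finset.mem_Icc]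
    tauto
  rw [this, Set.ncard_coe_finset]

lemma cnt_le (A : Set ℕ) (n : ℕ) : cnt A n ≤ n := by
  rw [cnt_eq]
  calc ((Finset.Icc 1 n).filter (· ∈ A)).card ≤ (Finset.Icc 1 n).card :=
        Finset.card_filter_le _ _
    _ = n := by rw [Nat.card_Icc]; omega

lemma cnt_succ (A : Set ℕ) (n : ℕ) :
    cnt A (n+1) = cnt A n + if (n+1) ∈ A then 1 else 0 := by
  rw [cnt_eq, cnt_eq, Icc_succ, Finset.filter_insert]
  split_ifs with h
  · rw [Finset.card_insert_of_notMem (by simp)]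
  · simp

lemma countP_range' (A : Set ℕ) (n : ℕ) :
    (List.range' 1 n).countP (fun x => decide (x ∈ A)) = cnt A n := by
  induction n with
  | zero => simp [cnt_eq]
  | succ n ih =>
    rw [range'_succ_concat, List.countP_append, ih, cnt_succ]
    simp [List.countP_singleton]

lemma beta_top (A : Set ℕ) (n : ℕ) : betaStat A n (n+1) = n - cnt A n := by
  rw [betaStat]
  have h1 : {x : ℕ | 1 ≤ x ∧ x < n+1 ∧ x ∉ A} = ↑((Finset.Icc 1 n).filter (· ∉ A)) := by
    ext x
    simp only [Set.mem_setOf_eq, Finset.coe_filter, Finset.mem_Icc]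
    constructor
    · rintro ⟨h1, h2, h3⟩; exact ⟨⟨h1, by omega⟩, h3⟩
    · rintro ⟨⟨h1, h2⟩, h3⟩; exact ⟨h1, by omega, h3⟩
  rw [h1, Set.ncard_coe_finset]
  have h2 := Finset.card_filter_add_card_filter_not
    (s := Finset.Icc 1 n) (p := fun x => x ∈ A)
  have h3 : (Finset.Icc 1 n).card = n := by rw [Nat.card_Icc]; omega
  have h4 := cnt_eq A n
  omega

lemma beta_indep (A : Set ℕ) (m n j : ℕ) : betaStat A m j = betaStat A n j := rfl

/-! ### the product -/

noncomputable def prodP (X Y : Set ℕ) (n : ℕ) (r : ℤ) : ℤ :=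
  ∏ x ∈ (Finset.Icc 1 n).filter (· ∈ X),
    (r + (betaStat X n x : ℤ) - (betaStat Y n x : ℤ))

lemma prodP_succ_not_mem (n : ℕ) (hM : (n+1) ∉ X) (r : ℤ) :
    prodP X Y (n+1) r = prodP X Y n r := by
  rw [prodP, prodP, Icc_succ, Finset.filter_insert, if_neg hM]
  rfl

lemma prodP_succ_mem (n : ℕ) (hM : (n+1) ∈ X) (r : ℤ) :
    prodP X Y (n+1) r
      = (r + ((cnt Y n : ℤ)) - (cnt X n : ℤ)) * prodP X Y n r := by
  rw [prodP, prodP, Icc_succ, Finset.filter_insert, if_pos hM,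
    Finset.prod_insert (by simp)]
  congr 1
  rw [beta_indep X (n+1) n (n+1), beta_indep Y (n+1) n (n+1), beta_top, beta_top]
  have h1 : cnt X n ≤ n := cnt_le X n
  have h2 : cnt Y n ≤ n := cnt_le Y n
  push_cast [Nat.cast_sub h1, Nat.cast_sub h2]
  ring

/-! ### binomial identities -/

lemma I1 (c j : ℕ) :
    (c+1) * Nat.choose (c+1+j) j = (c+j+1) * Nat.choose (c+j) j := by
  have h1 := Nat.choose_mul_factorial_mul_factorial (show j ≤ c+1+j by omega)
  have h2 := Nat.choose_mul_factorial_mul_factorial (show j ≤ c+j by omega)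
  have e1 : c+1+j-j = c+1 := by omega
  have e2 : c+j-j = c := by omega
  rw [e1] at h1
  rw [e2] at h2
  apply Nat.eq_of_mul_eq_mul_right
    (Nat.mul_pos (Nat.factorial_pos j) (Nat.factorial_pos c))
  have h3 : (c+1) * Nat.choose (c+1+j) j * (j.factorial * c.factorial)
      = (c+1+j).factorial := by
    rw [← h1, Nat.factorial_succ]
    ring
  have h4 : (c+j+1) * Nat.choose (c+j) j * (j.factorial * c.factorial)
      = (c+j+1) * (c+j).factorial := by
    rw [← h2]
    ring
  rw [h3, h4]
  rw [show c+1+j = (c+j)+1 by omega, Nat.factorial_succ]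

lemma I1c (c i : ℕ) :
    ((c:ℤ)+1) * (Nat.choose (c+1+i) i : ℤ) = ((c:ℤ)+i+1) * (Nat.choose (c+i) i : ℤ) := by
  exact_mod_cast congrArg (Nat.cast (R := ℤ)) (I1 c i)

lemma I2 (N m : ℕ) (hm : 1 ≤ m) :
    (m : ℤ) * (Nat.choose N m : ℤ) = ((N:ℤ) + 1 - m) * (Nat.choose N (m-1) : ℤ) := by
  have h1 := Nat.add_one_mul_choose_eq N (m-1)
  have e : m - 1 + 1 = m := by omega
  rw [e] at h1
  have h2 : Nat.choose (N+1) m = Nat.choose N (m-1) + Nat.choose N m := by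
    have := Nat.choose_succ_succ N (m-1)
    simp only [Nat.succ_eq_add_one] at this
    rwa [e] at this
  have h1' : ((N:ℤ)+1) * (Nat.choose N (m-1) : ℤ)
      = (Nat.choose (N+1) m : ℤ) * m := by exact_mod_cast h1
  rw [h2] at h1'
  push_cast at h1'
  linear_combination - h1'

lemma PAS (N m : ℕ) (hm : 1 ≤ m) :
    (Nat.choose (N+1) m : ℤ) = (Nat.choose N m : ℤ) + (Nat.choose N (m-1) : ℤ) := by
  have := Nat.choose_succ_succ N (m-1)
  simp only [Nat.succ_eq_add_one] at this
  rw [show m - 1 + 1 = m by omega] at this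
  push_cast [this]
  ring

/-- scalar identity for ALG1 -/
lemma SC1 (a c i j : ℕ) (hij : i < j) :
    ((c:ℤ)+i+1) * (Nat.choose (a+c+2) (j-i) : ℤ)
      = ((c:ℤ)+j+1) * (Nat.choose (a+c+1) (j-i) : ℤ)
        - ((a:ℤ)-j+1) * (Nat.choose (a+c+1) (j-i-1) : ℤ) := by
  have hm : 1 ≤ j - i := by omega
  have hPAS := PAS (a+c+1) (j-i) hm
  have hI2 := I2 (a+c+1) (j-i) hm
  push_cast at hI2
  have hm' : ((j - i : ℕ) : ℤ) = (j:ℤ) - i := by omega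
  rw [show a+c+2 = (a+c+1)+1 by omega]
  linear_combination ((c:ℤ)+i+1) * hPAS - hI2
    + ((Nat.choose (a+c+1) (j-i) : ℤ) + (Nat.choose (a+c+1) (j-i-1) : ℤ)) * hm'

/-- scalar identity for ALG2 -/
lemma SC2 (a c y i k : ℕ) (hik : i < k) :
    (Nat.choose (a+c+2) (k-i) : ℤ) * ((i:ℤ) + y - a)
      = - ((2*(a:ℤ)+c+2-y-k)) * (Nat.choose (a+c+1) (k-i-1) : ℤ)
        + ((y:ℤ)-a+k) * (Nat.choose (a+c+1) (k-i) : ℤ) := by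
  have hm : 1 ≤ k - i := by omega
  have hPAS := PAS (a+c+1) (k-i) hm
  have hI2 := I2 (a+c+1) (k-i) hm
  push_cast at hI2
  have hm' : ((k - i : ℕ) : ℤ) = (k:ℤ) - i := by omega
  rw [show a+c+2 = (a+c+1)+1 by omega]
  linear_combination ((i:ℤ)+y-a) * hPAS - hI2
    + ((Nat.choose (a+c+1) (k-i) : ℤ) + (Nat.choose (a+c+1) (k-i-1) : ℤ)) * hm'

lemma ALG1N (c a j : ℕ) (P : ℕ → ℤ) :
    ((c:ℤ)+1) * ∑ i ∈ Finset.range (j+1),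
        (-1:ℤ)^(j-i) * (Nat.choose (c+1+i) i : ℤ) * (Nat.choose (a+c+2) (j-i) : ℤ) * P i
      = ((c:ℤ)+(j:ℤ)+1) * ∑ i ∈ Finset.range (j+1),
          (-1:ℤ)^(j-i) * (Nat.choose (c+i) i : ℤ) * (Nat.choose (a+c+1) (j-i) : ℤ) * P i
        + ((a:ℤ)-(j:ℤ)+1) * ∑ i ∈ Finset.range j,
            (-1:ℤ)^(j-1-i) * (Nat.choose (c+i) i : ℤ)
              * (Nat.choose (a+c+1) (j-1-i) : ℤ) * P i := by
  set f1 : ℕ → ℤ := fun i =>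
    (-1:ℤ)^(j-i) * (Nat.choose (c+1+i) i : ℤ) * (Nat.choose (a+c+2) (j-i) : ℤ) * P i
    with hf1
  set f2 : ℕ → ℤ := fun i =>
    (-1:ℤ)^(j-i) * (Nat.choose (c+i) i : ℤ) * (Nat.choose (a+c+1) (j-i) : ℤ) * P i
    with hf2
  set f3 : ℕ → ℤ := fun i =>
    (-1:ℤ)^(j-1-i) * (Nat.choose (c+i) i : ℤ) * (Nat.choose (a+c+1) (j-1-i) : ℤ) * P i
    with hf3
  have htop : ((c:ℤ)+1) * f1 j = ((c:ℤ)+(j:ℤ)+1) * f2 j := by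
    rw [hf1, hf2]
    simp only [Nat.sub_self, pow_zero, Nat.choose_zero_right, Nat.cast_one]
    linear_combination (P j) * I1c c j
  have hterm : ∀ i ∈ Finset.range j,
      ((c:ℤ)+1) * f1 i = (((c:ℤ)+(j:ℤ)+1) * f2 i + ((a:ℤ)-(j:ℤ)+1) * f3 i) := by
    intro i hi
    rw [Finset.mem_range] at hi
    rw [hf1, hf2, hf3]
    simp only []
    rw [show j-1-i = j-i-1 by omega]
    have hs : (-1:ℤ)^(j-i) = -(-1:ℤ)^(j-i-1) := by
      conv_lhs => rw [show j-i = (j-i-1)+1 by omega]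
      ring
    rw [hs]
    have hsc := SC1 a c i j hi
    linear_combination
      (-(-1:ℤ)^(j-i-1) * (Nat.choose (a+c+2) (j-i) : ℤ) * P i) * I1c c i
      + (-(-1:ℤ)^(j-i-1) * (Nat.choose (c+i) i : ℤ) * P i) * hsc
  calc ((c:ℤ)+1) * ∑ i ∈ Finset.range (j+1), f1 i
      = ∑ i ∈ Finset.range j, ((c:ℤ)+1) * f1 i + ((c:ℤ)+1) * f1 j := by
        rw [Finset.mul_sum, Finset.sum_range_succ]
    _ = ∑ i ∈ Finset.range j,
          (((c:ℤ)+(j:ℤ)+1) * f2 i + ((a:ℤ)-(j:ℤ)+1) * f3 i)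
          + ((c:ℤ)+(j:ℤ)+1) * f2 j := by rw [Finset.sum_congr rfl hterm, htop]
    _ = (((c:ℤ)+(j:ℤ)+1) * (∑ i ∈ Finset.range j, f2 i + f2 j))
          + ((a:ℤ)-(j:ℤ)+1) * ∑ i ∈ Finset.range j, f3 i := by
        rw [Finset.sum_add_distrib, ← Finset.mul_sum, ← Finset.mul_sum]; ring
    _ = _ := by rw [← Finset.sum_range_succ]

lemma ALG2N (c a y k : ℕ) (P : ℕ → ℤ) :
    ∑ i ∈ Finset.range (k+1),
        (-1:ℤ)^(k-i) * (Nat.choose (c+i) i : ℤ) * (Nat.choose (a+c+2) (k-i) : ℤ)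
          * (((i:ℤ) + (y:ℤ) - (a:ℤ)) * P i)
      = (2*(a:ℤ)+(c:ℤ)+2-(y:ℤ)-(k:ℤ)) * ∑ i ∈ Finset.range k,
          (-1:ℤ)^(k-1-i) * (Nat.choose (c+i) i : ℤ) * (Nat.choose (a+c+1) (k-1-i) : ℤ) * P i
        + ((y:ℤ)-(a:ℤ)+(k:ℤ)) * ∑ i ∈ Finset.range (k+1),
            (-1:ℤ)^(k-i) * (Nat.choose (c+i) i : ℤ) * (Nat.choose (a+c+1) (k-i) : ℤ) * P i := by
  set g1 : ℕ → ℤ := fun i =>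
    (-1:ℤ)^(k-i) * (Nat.choose (c+i) i : ℤ) * (Nat.choose (a+c+2) (k-i) : ℤ)
      * (((i:ℤ) + (y:ℤ) - (a:ℤ)) * P i) with hg1
  set g2 : ℕ → ℤ := fun i =>
    (-1:ℤ)^(k-1-i) * (Nat.choose (c+i) i : ℤ) * (Nat.choose (a+c+1) (k-1-i) : ℤ) * P i
    with hg2
  set g3 : ℕ → ℤ := fun i =>
    (-1:ℤ)^(k-i) * (Nat.choose (c+i) i : ℤ) * (Nat.choose (a+c+1) (k-i) : ℤ) * P i
    with hg3
  have htop : g1 k = ((y:ℤ)-(a:ℤ)+(k:ℤ)) * g3 k := by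
    rw [hg1, hg3]
    simp only [Nat.sub_self, pow_zero, Nat.choose_zero_right, Nat.cast_one]
    ring
  have hterm : ∀ i ∈ Finset.range k,
      g1 i = ((2*(a:ℤ)+(c:ℤ)+2-(y:ℤ)-(k:ℤ)) * g2 i
        + ((y:ℤ)-(a:ℤ)+(k:ℤ)) * g3 i) := by
    intro i hi
    rw [Finset.mem_range] at hi
    rw [hg1, hg2, hg3]
    simp only []
    rw [show k-1-i = k-i-1 by omega]
    have hs : (-1:ℤ)^(k-i) = -(-1:ℤ)^(k-i-1) := by
      conv_lhs => rw [show k-i = (k-i-1)+1 by omega]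
      ring
    rw [hs]
    have hsc := SC2 a c y i k hi
    linear_combination
      (-(-1:ℤ)^(k-i-1) * (Nat.choose (c+i) i : ℤ) * P i) * hsc
  calc ∑ i ∈ Finset.range (k+1), g1 i
      = ∑ i ∈ Finset.range k, g1 i + g1 k := Finset.sum_range_succ _ _
    _ = ∑ i ∈ Finset.range k,
          ((2*(a:ℤ)+(c:ℤ)+2-(y:ℤ)-(k:ℤ)) * g2 i + ((y:ℤ)-(a:ℤ)+(k:ℤ)) * g3 i)
          + ((y:ℤ)-(a:ℤ)+(k:ℤ)) * g3 k := by rw [Finset.sum_congr rfl hterm, htop]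
    _ = (2*(a:ℤ)+(c:ℤ)+2-(y:ℤ)-(k:ℤ)) * ∑ i ∈ Finset.range k, g2 i
          + ((y:ℤ)-(a:ℤ)+(k:ℤ)) * (∑ i ∈ Finset.range k, g3 i + g3 k) := by
        rw [Finset.sum_add_distrib, ← Finset.mul_sum, ← Finset.mul_sum]; ring
    _ = _ := by rw [← Finset.sum_range_succ]

/-! ### the right-hand side -/

noncomputable def RHSZ (X Y : Set ℕ) (n : ℕ) (s : ℤ) : ℤ :=
  ((n - cnt X n).factorial : ℤ) *
    ∑ r ∈ Finset.Icc (0 : ℤ) ((cnt X n : ℤ) - s),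
      (-1 : ℤ) ^ ((cnt X n : ℤ) - s - r).toNat *
        ((n - cnt X n + r.toNat).choose r.toNat : ℤ) *
        ((n + 1).choose ((cnt X n : ℤ) - s - r).toNat : ℤ) *
        prodP X Y n r

lemma sumconv (j : ℤ) (hj : 0 ≤ j) (F : ℤ → ℤ) :
    ∑ r ∈ Finset.Icc (0:ℤ) j, F r = ∑ i ∈ Finset.range (j.toNat + 1), F (i : ℤ) := by
  refine Finset.sum_nbij' (fun r => r.toNat) (fun i => (i:ℤ)) ?_ ?_ ?_ ?_ ?_
  · intro r hr
    simp only [Finset.mem_Icc] at hr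
    simp only [Finset.mem_range]
    omega
  · intro i hi
    simp only [Finset.mem_range] at hi
    simp only [Finset.mem_Icc]
    omega
  · intro r hr
    simp only [Finset.mem_Icc] at hr
    show ((r.toNat : ℕ) : ℤ) = r
    omega
  · intro i _
    show ((i : ℤ)).toNat = i
    exact Int.toNat_natCast i
  · intro r hr
    simp only [Finset.mem_Icc] at hr
    show F r = F ((r.toNat : ℕ) : ℤ)
    rw [Int.toNat_of_nonneg hr.1]

lemma RHSZ_empty (n : ℕ) (s : ℤ) (hs : (cnt X n : ℤ) - s < 0) : RHSZ X Y n s = 0 := by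
  rw [RHSZ, Finset.Icc_eq_empty (by omega), Finset.sum_empty, mul_zero]

lemma bridge1 (n : ℕ) (hM : (n+1) ∉ X) (s : ℤ) :
    RHSZ X Y (n+1) s = ((n:ℤ)+1-s) * RHSZ X Y n s + (s+1) * RHSZ X Y n (s+1) := by
  have ha : cnt X (n+1) = cnt X n := by
    have := cnt_succ X n
    rw [if_neg hM] at this
    omega
  have hale : cnt X n ≤ n := cnt_le X n
  set a := cnt X n with haa
  set c := n - a with hc
  by_cases hs : 0 ≤ (a:ℤ) - s
  · set j := ((a:ℤ) - s).toNat with hj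
    have h1 : RHSZ X Y (n+1) s
        = (((c+1).factorial : ℕ) : ℤ) * ∑ i ∈ Finset.range (j+1),
            (-1:ℤ)^(j-i) * (Nat.choose (c+1+i) i : ℤ)
              * (Nat.choose (a+c+2) (j-i) : ℤ) * prodP X Y n (i:ℤ) := by
      rw [RHSZ, ha, show n+1 - a = c+1 by omega]
      congr 1
      rw [sumconv _ hs, ← hj]
      apply Finset.sum_congr rfl
      intro i hi
      rw [Finset.mem_range] at hi
      rw [prodP_succ_not_mem X Y n hM]
      rw [Int.toNat_natCast]
      rw [show ((a:ℤ) - s - (i:ℤ)).toNat = j - i by omega]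
      rw [show n+1+1 = a+c+2 by omega]
    have h2 : RHSZ X Y n s
        = ((c.factorial : ℕ) : ℤ) * ∑ i ∈ Finset.range (j+1),
            (-1:ℤ)^(j-i) * (Nat.choose (c+i) i : ℤ)
              * (Nat.choose (a+c+1) (j-i) : ℤ) * prodP X Y n (i:ℤ) := by
      rw [RHSZ, ← haa, ← hc]
      congr 1
      rw [sumconv _ hs, ← hj]
      apply Finset.sum_congr rfl
      intro i hi
      rw [Finset.mem_range] at hi
      rw [Int.toNat_natCast]
      rw [show ((a:ℤ) - s - (i:ℤ)).toNat = j - i by omega]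
      rw [show n+1 = a+c+1 by omega]
    have h3 : RHSZ X Y n (s+1)
        = ((c.factorial : ℕ) : ℤ) * ∑ i ∈ Finset.range j,
            (-1:ℤ)^(j-1-i) * (Nat.choose (c+i) i : ℤ)
              * (Nat.choose (a+c+1) (j-1-i) : ℤ) * prodP X Y n (i:ℤ) := by
      by_cases hj0 : j = 0
      · rw [RHSZ_empty X Y n (s+1) (by omega), hj0]
        simp
      · have hs' : 0 ≤ (a:ℤ) - (s+1) := by omega
        rw [RHSZ, ← haa, ← hc]
        congr 1
        rw [sumconv _ hs']
        rw [show ((a:ℤ) - (s+1)).toNat = j - 1 by omega,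
          show j - 1 + 1 = j by omega]
        apply Finset.sum_congr rfl
        intro i hi
        rw [Finset.mem_range] at hi
        rw [Int.toNat_natCast]
        rw [show ((a:ℤ) - (s+1) - (i:ℤ)).toNat = j - 1 - i by omega]
        rw [show n+1 = a+c+1 by omega]
    rw [h1, h2, h3]
    have hco1 : (n:ℤ)+1-s = (c:ℤ)+(j:ℤ)+1 := by omega
    have hco2 : s+1 = (a:ℤ)-(j:ℤ)+1 := by omega
    rw [hco1, hco2]
    have hfac : (((c+1).factorial : ℕ) : ℤ) = ((c:ℤ)+1) * ((c.factorial : ℕ) : ℤ) := by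
      rw [Nat.factorial_succ]
      push_cast
      ring
    rw [hfac]
    have halg := ALG1N c a j (fun i => prodP X Y n (i:ℤ))
    linear_combination ((c.factorial : ℕ) : ℤ) * halg
  · have e1 : RHSZ X Y (n+1) s = 0 := RHSZ_empty X Y (n+1) s (by rw [ha]; omega)
    have e2 : RHSZ X Y n s = 0 := RHSZ_empty X Y n s (by omega)
    have e3 : RHSZ X Y n (s+1) = 0 := RHSZ_empty X Y n (s+1) (by omega)
    rw [e1, e2, e3]
    ring

lemma bridge2 (n : ℕ) (hM : (n+1) ∈ X) (s : ℤ) :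
    RHSZ X Y (n+1) s = ((n:ℤ)+1-(cnt Y n : ℤ)+s) * RHSZ X Y n s
      + ((cnt Y n : ℤ)-s+1) * RHSZ X Y n (s-1) := by
  have ha : cnt X (n+1) = cnt X n + 1 := by
    have := cnt_succ X n
    rw [if_pos hM] at this
    omega
  have hale : cnt X n ≤ n := cnt_le X n
  set y := cnt Y n with hyy
  set a := cnt X n with haa
  set c := n - a with hc
  by_cases hs : 0 ≤ (a:ℤ) + 1 - s
  · set k := ((a:ℤ) + 1 - s).toNat with hk
    have h1 : RHSZ X Y (n+1) s
        = ((c.factorial : ℕ) : ℤ) * ∑ i ∈ Finset.range (k+1),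
            (-1:ℤ)^(k-i) * (Nat.choose (c+i) i : ℤ)
              * (Nat.choose (a+c+2) (k-i) : ℤ)
              * (((i:ℤ) + (y:ℤ) - (a:ℤ)) * prodP X Y n (i:ℤ)) := by
      rw [RHSZ, ha, show n+1 - (a+1) = c by omega]
      congr 1
      rw [show ((a+1:ℕ):ℤ) - s = (a:ℤ) + 1 - s by push_cast; ring]
      rw [sumconv _ hs, ← hk]
      apply Finset.sum_congr rfl
      intro i hi
      rw [Finset.mem_range] at hi
      rw [prodP_succ_mem X Y n hM]
      rw [Int.toNat_natCast]
      rw [show ((a:ℤ) + 1 - s - (i:ℤ)).toNat = k - i by omega]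
      rw [show n+1+1 = a+c+2 by omega]
    have h2 : RHSZ X Y n s
        = ((c.factorial : ℕ) : ℤ) * ∑ i ∈ Finset.range k,
            (-1:ℤ)^(k-1-i) * (Nat.choose (c+i) i : ℤ)
              * (Nat.choose (a+c+1) (k-1-i) : ℤ) * prodP X Y n (i:ℤ) := by
      by_cases hk0 : k = 0
      · rw [RHSZ_empty X Y n s (by omega), hk0]
        simp
      · have hs' : 0 ≤ (a:ℤ) - s := by omega
        rw [RHSZ, ← haa, ← hc]
        congr 1
        rw [sumconv _ hs']
        rw [show ((a:ℤ) - s).toNat = k - 1 by omega, show k - 1 + 1 = k by omega]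
        apply Finset.sum_congr rfl
        intro i hi
        rw [Finset.mem_range] at hi
        rw [Int.toNat_natCast]
        rw [show ((a:ℤ) - s - (i:ℤ)).toNat = k - 1 - i by omega]
        rw [show n+1 = a+c+1 by omega]
    have h3 : RHSZ X Y n (s-1)
        = ((c.factorial : ℕ) : ℤ) * ∑ i ∈ Finset.range (k+1),
            (-1:ℤ)^(k-i) * (Nat.choose (c+i) i : ℤ)
              * (Nat.choose (a+c+1) (k-i) : ℤ) * prodP X Y n (i:ℤ) := by
      have hs' : 0 ≤ (a:ℤ) - (s-1) := by omega
      rw [RHSZ, ← haa, ← hc]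
      congr 1
      rw [sumconv _ hs']
      rw [show ((a:ℤ) - (s-1)).toNat = k by omega]
      apply Finset.sum_congr rfl
      intro i hi
      rw [Finset.mem_range] at hi
      rw [Int.toNat_natCast]
      rw [show ((a:ℤ) - (s-1) - (i:ℤ)).toNat = k - i by omega]
      rw [show n+1 = a+c+1 by omega]
    rw [h1, h2, h3]
    have hco1 : (n:ℤ)+1-(y:ℤ)+s = 2*(a:ℤ)+(c:ℤ)+2-(y:ℤ)-(k:ℤ) := by omega
    have hco2 : (y:ℤ)-s+1 = (y:ℤ)-(a:ℤ)+(k:ℤ) := by omega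
    rw [hco1, hco2]
    have halg := ALG2N c a y k (fun i => prodP X Y n (i:ℤ))
    linear_combination ((c.factorial : ℕ) : ℤ) * halg
  · have e1 : RHSZ X Y (n+1) s = 0 := RHSZ_empty X Y (n+1) s (by rw [ha]; push_cast; omega)
    have e2 : RHSZ X Y n s = 0 := RHSZ_empty X Y n s (by omega)
    have e3 : RHSZ X Y n (s-1) = 0 := RHSZ_empty X Y n (s-1) (by omega)
    rw [e1, e2, e3]
    ring

/-! ### the master induction -/

noncomputable def DlZ (X Y : Set ℕ) (n : ℕ) (s : ℤ) : ℤ :=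
  if 0 ≤ s then (Dl X Y n s.toNat : ℤ) else 0

lemma RECZ1 (n : ℕ) (hM : (n+1) ∉ X) (s : ℤ) :
    DlZ X Y (n+1) s = ((n:ℤ)+1-s) * DlZ X Y n s + (s+1) * DlZ X Y n (s+1) := by
  by_cases h0 : 0 ≤ s
  · have h1 : (0:ℤ) ≤ s + 1 := by omega
    rw [DlZ, DlZ, DlZ, if_pos h0, if_pos h0, if_pos h1]
    have hrec := REC1 X Y n s.toNat hM
    rw [Int.toNat_of_nonneg h0] at hrec
    rw [show (s+1).toNat = s.toNat + 1 by omega]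
    exact hrec
  · rw [DlZ, DlZ, if_neg h0, if_neg h0]
    by_cases h1 : 0 ≤ s + 1
    · rw [show s + 1 = (0:ℤ) by omega]
      ring
    · rw [DlZ, if_neg h1]
      ring

lemma RECZ2 (n : ℕ) (hM : (n+1) ∈ X) (s : ℤ) :
    DlZ X Y (n+1) s = ((n:ℤ)+1-(cnt Y n : ℤ)+s) * DlZ X Y n s
      + ((cnt Y n : ℤ)-s+1) * DlZ X Y n (s-1) := by
  by_cases h0 : 0 ≤ s
  · rw [DlZ, DlZ, if_pos h0, if_pos h0]
    have hrec := REC2 X Y n s.toNat hM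
    rw [countP_range'] at hrec
    rw [Int.toNat_of_nonneg h0] at hrec
    have h2 : (if s.toNat = 0 then 0 else (Dl X Y n (s.toNat-1) : ℤ)) = DlZ X Y n (s-1) := by
      by_cases hs0 : s = 0
      · subst hs0
        have h1 : DlZ X Y n ((0:ℤ) - 1) = 0 := by
          rw [DlZ, if_neg (by norm_num)]
        rw [h1]
        norm_num
      · rw [if_neg (by omega), DlZ, if_pos (by omega),
          show (s-1).toNat = s.toNat - 1 by omega]
    rw [hrec, h2]
  · rw [DlZ, DlZ, DlZ, if_neg h0, if_neg h0, if_neg (by omega : ¬ (0:ℤ) ≤ s - 1)]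
    ring

lemma NEGSUM' (m : ℕ) (hm : 1 ≤ m) :
    ∑ t ∈ Finset.range (m+1), (-1:ℤ)^t * (Nat.choose 1 t : ℤ) = 0 := by
  induction m with
  | zero => omega
  | succ m ih =>
    by_cases hm1 : 1 ≤ m
    · rw [Finset.sum_range_succ, ih hm1,
        Nat.choose_eq_zero_of_lt (by omega)]
      simp
    · have : m = 0 := by omega
      subst this
      decide
      
lemma NEGSUM (m : ℕ) (hm : 1 ≤ m) :
    ∑ i ∈ Finset.range (m+1), (-1:ℤ)^(m-i) * (Nat.choose 1 (m-i) : ℤ) = 0 := by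
  have hrefl := Finset.sum_range_reflect
    (fun t => (-1:ℤ)^t * (Nat.choose 1 t : ℤ)) (m+1)
  simp only [Nat.add_sub_cancel] at hrefl
  rw [hrefl]
  exact NEGSUM' m hm

lemma cnt_zero (A : Set ℕ) : cnt A 0 = 0 := by
  rw [cnt_eq]
  simp

lemma Dl_zero (s : ℕ) : Dl X Y 0 s = if s = 0 then 1 else 0 := by
  have hp : permsL 0 = {[]} := by
    rw [permsL]
    simp
  rw [Dl, hp, Finset.filter_singleton]
  by_cases hs : s = 0
  · simp [hs]
  · simp only [desL_nil, hs, if_false]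
    simp only [show ¬ (0 = s) by omega, if_false]
    simp

lemma master (n : ℕ) : ∀ s : ℤ, DlZ X Y n s = RHSZ X Y n s := by
  induction n with
  | zero =>
    intro s
    have hc : cnt X 0 = 0 := cnt_zero X
    have hprod : ∀ r : ℤ, prodP X Y 0 r = 1 := by
      intro r
      rw [prodP]
      simp
    by_cases h0 : 0 ≤ s
    · by_cases hs0 : s = 0
      · subst hs0
        rw [DlZ, if_pos le_rfl, RHSZ, hc, Dl_zero]
        norm_num [Finset.Icc_self, Finset.sum_singleton, hprod]
      · rw [DlZ, if_pos h0, RHSZ_empty X Y 0 s (by rw [hc]; omega)]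
        rw [Dl_zero X Y s.toNat, if_neg (by omega)]
        simp
    · rw [DlZ, if_neg h0, RHSZ, hc]
      set m := (-s).toNat with hm
      have hm1 : 1 ≤ m := by omega
      have hconv : ∑ r ∈ Finset.Icc (0:ℤ) (((0:ℕ):ℤ) - s),
          (-1:ℤ)^((((0:ℕ):ℤ) - s - r).toNat)
            * ((0 - 0 + r.toNat).choose r.toNat : ℤ)
            * ((0+1).choose ((((0:ℕ):ℤ) - s - r).toNat) : ℤ) * prodP X Y 0 r
          = ∑ i ∈ Finset.range (m+1), (-1:ℤ)^(m-i) * (Nat.choose 1 (m-i) : ℤ) := by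
        rw [show ((0:ℕ):ℤ) - s = (m:ℤ) by omega]
        rw [sumconv _ (by omega), Int.toNat_natCast]
        apply Finset.sum_congr rfl
        intro i hi
        rw [Finset.mem_range] at hi
        rw [hprod, Int.toNat_natCast]
        rw [show ((m:ℤ) - (i:ℤ)).toNat = m - i by omega]
        simp [Nat.choose_self]
      rw [hconv, NEGSUM m hm1]
      simp
  | succ n ih =>
    intro s
    by_cases hM : (n+1) ∈ X
    · rw [RECZ2 X Y n hM s, ih s, ih (s-1), bridge2 X Y n hM s]
    · rw [RECZ1 X Y n hM s, ih s, ih (s+1), bridge1 X Y n hM s]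

end HR

/-- Theorem 4 (Hall–Remmel): for all `X, Y ⊆ ℕ₊`, `n ≥ 1`, `s ≥ 0`,
`D_{n,s}^{X,Y} = x_n^c! ∑_{r=0}^{x_n - s} (-1)^{x_n-s-r} C(x_n^c + r, r) C(n+1, x_n-s-r)
∏_{x ∈ X_n} (r + β_{X,n,x} - β_{Y,n,x})` (an identity of integers; the sum is
empty when `x_n - s < 0`). -/
theorem HR_formula_two (X Y : Set ℕ) (hX : 0 ∉ X) (hY : 0 ∉ Y) (n s : ℕ) (hn : 1 ≤ n) :
    (D X Y n s : ℤ) =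
      ((n - cnt X n).factorial : ℤ) *
        ∑ r ∈ Finset.Icc (0 : ℤ) ((cnt X n : ℤ) - (s : ℤ)),
          (-1 : ℤ) ^ ((cnt X n : ℤ) - (s : ℤ) - r).toNat *
            ((n - cnt X n + r.toNat).choose r.toNat : ℤ) *
            ((n + 1).choose ((cnt X n : ℤ) - (s : ℤ) - r).toNat : ℤ) *
            ∏ x ∈ (Finset.Icc 1 n).filter (· ∈ X),
              (r + (betaStat X n x : ℤ) - (betaStat Y n x : ℤ)) := by
  have h1 := HR.D_eq_Dl X Y n s
  have h2 := HR.master X Y n (s : ℤ)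
  rw [HR.DlZ, if_pos (Int.natCast_nonneg s), Int.toNat_natCast] at h2
  rw [h1, h2, HR.RHSZ]
  simp only [HR.prodP]
end

section
/- Let X, Y be subsets of the positive integers and n ≥ 1 an integer with n+1 ∉ X. Then for all k ≥ 0, D_{n+1,k}^{X,Y} = (k+1) · D_{n,k+1}^{X,Y} + (n+1−k) · D_{n,k}^{X,Y}. -/
open Equiv
open scoped Classical

noncomputable def ins (n : ℕ) (j : Fin (n+1)) (σ : Equiv.Perm (Fin n)) :
    Equiv.Perm (Fin (n+1)) :=
  (finSuccEquiv' j).trans ((Equiv.optionCongr σ).trans (finSuccEquiv' (Fin.last n)).symm)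

lemma ins_apply_self (n : ℕ) (j : Fin (n+1)) (σ : Equiv.Perm (Fin n)) :
    ins n j σ j = Fin.last n := by
  simp [ins, finSuccEquiv'_at]

lemma ins_apply_succAbove (n : ℕ) (j : Fin (n+1)) (σ : Equiv.Perm (Fin n)) (i : Fin n) :
    ins n j σ (j.succAbove i) = (σ i).castSucc := by
  simp only [ins, Equiv.trans_apply, finSuccEquiv'_succAbove, optionCongr_apply,
    Option.map_some]
  exact finSuccEquiv'_symm_some_below (Fin.castSucc_lt_last _)

lemma ins_apply_lt (n : ℕ) (j : Fin (n+1)) (σ : Equiv.Perm (Fin n)) (i : Fin (n+1))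
    (hij : (i : ℕ) < (j : ℕ)) :
    ins n j σ i = (σ ⟨i, lt_of_lt_of_le hij (Nat.lt_succ_iff.mp j.isLt)⟩).castSucc := by
  have h2 : i = j.succAbove ⟨(i : ℕ), lt_of_lt_of_le hij (Nat.lt_succ_iff.mp j.isLt)⟩ := by
    rw [Fin.succAbove_of_castSucc_lt]
    · rfl
    · exact hij
  conv_lhs => rw [h2]
  rw [ins_apply_succAbove]

lemma ins_apply_gt (n : ℕ) (j : Fin (n+1)) (σ : Equiv.Perm (Fin n)) (i : Fin (n+1))
    (hij : (j : ℕ) < (i : ℕ)) :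
    ins n j σ i = (σ ⟨(i : ℕ) - 1, by have := i.isLt; omega⟩).castSucc := by
  have h2 : i = j.succAbove ⟨(i : ℕ) - 1, by have := i.isLt; omega⟩ := by
    rw [Fin.succAbove_of_le_castSucc]
    · ext; have := i.isLt; simp [Fin.val_succ]; omega
    · rw [Fin.le_castSucc_iff, Fin.lt_def]
      simp only [Fin.val_succ]
      have := i.isLt; omega
  conv_lhs => rw [h2]
  rw [ins_apply_succAbove]

/-- descent set -/
def dset (X Y : Set ℕ) (n : ℕ) (σ : Equiv.Perm (Fin n)) : Set (Fin n) :=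
  {i : Fin n | ∃ h : (i : ℕ) + 1 < n,
    (σ ⟨(i : ℕ) + 1, h⟩ : ℕ) < (σ i : ℕ) ∧
    ((σ i : ℕ) + 1) ∈ X ∧ ((σ ⟨(i : ℕ) + 1, h⟩ : ℕ) + 1) ∈ Y}

lemma fin_congr {n : ℕ} (σ : Equiv.Perm (Fin n)) (a b : Fin n) (hab : (a : ℕ) = (b : ℕ)) :
    σ a = σ b := by congr 1; exact Fin.ext hab

lemma dset_ins (X Y : Set ℕ) (n : ℕ) (hX : (n : ℕ) + 1 ∉ X) (j : Fin (n+1))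
    (σ : Equiv.Perm (Fin n)) :
    dset X Y (n+1) (ins n j σ) =
      j.succAbove '' {i' | i' ∈ dset X Y n σ ∧ (i' : ℕ) + 1 ≠ (j : ℕ)} := by
  ext i
  constructor
  · rintro ⟨h, hlt, hx, hy⟩
    set τ := ins n j σ with hτ
    have hij : (i : ℕ) ≠ (j : ℕ) := by
      intro he
      have he2 : i = j := Fin.ext he
      rw [he2, ins_apply_self] at hx
      simp only [Fin.val_last] at hx
      exact hX hx
    have hij2 : (i : ℕ) + 1 ≠ (j : ℕ) := by
      intro he
      have he2 : (⟨(i : ℕ) + 1, h⟩ : Fin (n+1)) = j := Fin.ext he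
      rw [he2, ins_apply_self] at hlt
      simp only [Fin.val_last] at hlt
      have := (τ i).isLt
      omega
    rcases Nat.lt_or_ge (i : ℕ) (j : ℕ) with hc | hc
    · -- i < j, hence i + 1 < j
      have hc2 : (i : ℕ) + 1 < (j : ℕ) := by omega
      have hjn : (j : ℕ) ≤ n := Nat.lt_succ_iff.mp j.isLt
      have hin : (i : ℕ) < n := by omega
      have h1 : τ i = (σ ⟨(i : ℕ), hin⟩).castSucc := by
        rw [hτ, ins_apply_lt n j σ i hc]
      have h2 : τ ⟨(i : ℕ) + 1, h⟩ = (σ ⟨(i : ℕ) + 1, by omega⟩).castSucc := by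
        rw [hτ, ins_apply_lt n j σ _ hc2]
      rw [h1, h2] at hlt
      rw [h1] at hx
      rw [h2] at hy
      refine ⟨⟨(i : ℕ), hin⟩, ⟨⟨(by omega : (i : ℕ) + 1 < n), ?_, ?_, ?_⟩, hij2⟩, ?_⟩
      · exact hlt
      · exact hx
      · exact hy
      · rw [Fin.succAbove_of_castSucc_lt _ _ hc]
        exact Fin.ext rfl
    · -- j < i
      have hc' : (j : ℕ) < (i : ℕ) := by omega
      obtain ⟨m, hm⟩ : ∃ m, (i : ℕ) = m + 1 := ⟨(i : ℕ) - 1, by omega⟩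
      have hmn : m + 1 < n := by omega
      have h1 : τ i = (σ ⟨m, by omega⟩).castSucc := by
        rw [hτ, ins_apply_gt n j σ i hc']
        exact congrArg _ (fin_congr σ _ _ (by show (i : ℕ) - 1 = m; omega))
      have h2 : τ ⟨(i : ℕ) + 1, h⟩ = (σ ⟨m + 1, hmn⟩).castSucc := by
        rw [hτ, ins_apply_gt n j σ _ (show (j : ℕ) < (i : ℕ) + 1 by omega)]
        exact congrArg _ (fin_congr σ _ _ (by show (i : ℕ) + 1 - 1 = m + 1; omega))
      rw [h1, h2] at hlt
      rw [h1] at hx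
      rw [h2] at hy
      refine ⟨⟨m, by omega⟩, ⟨⟨hmn, ?_, ?_, ?_⟩, (by omega : m + 1 ≠ (j : ℕ))⟩, ?_⟩
      · exact hlt
      · exact hx
      · exact hy
      · rw [Fin.succAbove_of_le_castSucc _ _ (by
          rw [Fin.le_def]
          show (j : ℕ) ≤ m
          omega)]
        exact Fin.ext (by show m + 1 = (i : ℕ); omega)
  · rintro ⟨i', ⟨⟨h', hlt, hx, hy⟩, hne⟩, rfl⟩
    set τ := ins n j σ with hτ
    rcases Nat.lt_or_ge (i' : ℕ) (j : ℕ) with hc | hc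
    · have hsa : j.succAbove i' = ⟨(i' : ℕ), by omega⟩ := by
        rw [Fin.succAbove_of_castSucc_lt _ _ hc]; exact Fin.ext rfl
      rw [hsa]
      have hc2 : (i' : ℕ) + 1 < (j : ℕ) := by omega
      refine ⟨(by omega : (i' : ℕ) + 1 < n + 1), ?_⟩
      have h1 : τ ⟨(i' : ℕ), by omega⟩ = (σ i').castSucc := by
        rw [hτ, ins_apply_lt n j σ _ hc]

      have h2 : τ ⟨(i' : ℕ) + 1, by omega⟩ = (σ ⟨(i' : ℕ) + 1, h'⟩).castSucc := by
        rw [hτ, ins_apply_lt n j σ _ hc2]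
      refine ⟨?_, ?_, ?_⟩
      · rw [h1, h2]; exact hlt
      · rw [h1]; exact hx
      · rw [h2]; exact hy
    · have hsa : j.succAbove i' = ⟨(i' : ℕ) + 1, by omega⟩ := by
        rw [Fin.succAbove_of_le_castSucc _ _ (by rw [Fin.le_def]; exact hc)]
        exact Fin.ext rfl
      rw [hsa]
      refine ⟨(by omega : (i' : ℕ) + 1 + 1 < n + 1), ?_⟩
      have h1 : τ ⟨(i' : ℕ) + 1, by omega⟩ = (σ i').castSucc := by
        rw [hτ, ins_apply_gt n j σ _ (show (j : ℕ) < (i' : ℕ) + 1 by omega)]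
        exact congrArg _ (fin_congr σ _ _ (by show (i' : ℕ) + 1 - 1 = (i' : ℕ); omega))
      have h2 : τ ⟨(i' : ℕ) + 1 + 1, by omega⟩ = (σ ⟨(i' : ℕ) + 1, h'⟩).castSucc := by
        rw [hτ, ins_apply_gt n j σ _ (show (j : ℕ) < (i' : ℕ) + 1 + 1 by omega)]
        exact congrArg _ (fin_congr σ _ _ (by show (i' : ℕ) + 1 + 1 - 1 = (i' : ℕ) + 1; omega))
      refine ⟨?_, ?_, ?_⟩
      · rw [h1, h2]; exact hlt
      · rw [h1]; exact hx
      · rw [h2]; exact hy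

lemma gapset (X Y : Set ℕ) (n : ℕ) (σ : Equiv.Perm (Fin n)) :
    {j : Fin (n+1) | ∃ i' ∈ dset X Y n σ, (i' : ℕ) + 1 = (j : ℕ)} =
      Fin.succ '' (dset X Y n σ) := by
  ext j
  simp only [Set.mem_setOf_eq, Set.mem_image]
  constructor
  · rintro ⟨i', hi', he⟩
    exact ⟨i', hi', Fin.ext (by rw [Fin.val_succ]; exact he)⟩
  · rintro ⟨i', hi', rfl⟩
    exact ⟨i', hi', (Fin.val_succ i').symm⟩

lemma ncard_gapset (X Y : Set ℕ) (n : ℕ) (σ : Equiv.Perm (Fin n)) :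
    {j : Fin (n+1) | ∃ i' ∈ dset X Y n σ, (i' : ℕ) + 1 = (j : ℕ)}.ncard =
      desCount X Y n σ := by
  rw [gapset, Set.ncard_image_of_injective _ (Fin.succ_injective n)]
  rfl

lemma desCount_ins (X Y : Set ℕ) (n : ℕ) (hX : (n : ℕ) + 1 ∉ X) (j : Fin (n+1))
    (σ : Equiv.Perm (Fin n)) :
    desCount X Y (n+1) (ins n j σ) =
      if ∃ i' ∈ dset X Y n σ, (i' : ℕ) + 1 = (j : ℕ) then desCount X Y n σ - 1
      else desCount X Y n σ := by
  have hd : desCount X Y (n+1) (ins n j σ) = (dset X Y (n+1) (ins n j σ)).ncard := rfl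
  rw [hd, dset_ins X Y n hX j σ,
    Set.ncard_image_of_injective _ (Fin.succAbove_right_injective)]
  split_ifs with hg
  · obtain ⟨i₀, hi₀, he₀⟩ := hg
    have hs : {i' | i' ∈ dset X Y n σ ∧ (i' : ℕ) + 1 ≠ (j : ℕ)} = dset X Y n σ \ {i₀} := by
      ext i'
      simp only [Set.mem_setOf_eq, Set.mem_diff, Set.mem_singleton_iff]
      constructor
      · rintro ⟨h1, h2⟩
        refine ⟨h1, fun he => h2 (by rw [he]; exact he₀)⟩
      · rintro ⟨h1, h2⟩
        refine ⟨h1, fun he => h2 (Fin.ext (by omega))⟩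
    rw [hs, Set.ncard_diff_singleton_of_mem hi₀]
    rfl
  · push_neg at hg
    have hs : {i' | i' ∈ dset X Y n σ ∧ (i' : ℕ) + 1 ≠ (j : ℕ)} = dset X Y n σ := by
      ext i'
      simp only [Set.mem_setOf_eq, and_iff_left_iff_imp]
      exact fun h1 => hg i' h1
    rw [hs]
    rfl

lemma desCount_le (X Y : Set ℕ) (n : ℕ) (σ : Equiv.Perm (Fin n)) :
    desCount X Y n σ ≤ n := by
  have : desCount X Y n σ = (dset X Y n σ).ncard := rfl
  rw [this]
  calc (dset X Y n σ).ncard ≤ (Set.univ : Set (Fin n)).ncard :=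
        Set.ncard_le_ncard (Set.subset_univ _) Set.finite_univ
    _ = n := by rw [Set.ncard_univ]; simp

lemma card_Q (X Y : Set ℕ) (n : ℕ) (hX : (n : ℕ) + 1 ∉ X) (σ : Equiv.Perm (Fin n)) (k : ℕ) :
    {j : Fin (n+1) | desCount X Y (n+1) (ins n j σ) = k}.ncard =
      if desCount X Y n σ = k + 1 then k + 1
      else if desCount X Y n σ = k then (n + 1) - k else 0 := by
  have hpos : (∃ i' ∈ dset X Y n σ, True) → 1 ≤ desCount X Y n σ := by
    rintro ⟨i', hi', -⟩
    have : desCount X Y n σ = (dset X Y n σ).ncard := rfl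
    rw [this]
    exact (Set.ncard_pos (Set.toFinite _)).mpr ⟨i', hi'⟩
  split_ifs with h1 h2
  · -- desCount σ = k + 1 : the set is exactly the gap set
    have hs : {j : Fin (n+1) | desCount X Y (n+1) (ins n j σ) = k} =
        {j : Fin (n+1) | ∃ i' ∈ dset X Y n σ, (i' : ℕ) + 1 = (j : ℕ)} := by
      ext j
      simp only [Set.mem_setOf_eq]
      rw [desCount_ins X Y n hX j σ]
      split_ifs with hg
      · simp only [h1, Nat.add_sub_cancel, true_iff]
        exact hg
      · simp only [h1]
        constructor
        · intro he; omega
        · intro hg'; exact absurd hg' hg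
    rw [hs, ncard_gapset, h1]
  · -- desCount σ = k : the set is the complement of the gap set
    have hs : {j : Fin (n+1) | desCount X Y (n+1) (ins n j σ) = k} =
        {j : Fin (n+1) | ∃ i' ∈ dset X Y n σ, (i' : ℕ) + 1 = (j : ℕ)}ᶜ := by
      ext j
      simp only [Set.mem_setOf_eq, Set.mem_compl_iff]
      rw [desCount_ins X Y n hX j σ]
      split_ifs with hg
      · have hd1 : 1 ≤ desCount X Y n σ := by
          obtain ⟨i', hi', -⟩ := hg
          exact hpos ⟨i', hi', trivial⟩
        constructor
        · intro he; exfalso; omega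
        · intro hg'; exact absurd hg hg'
      · simp only [h2, true_iff]
        exact hg
    rw [hs]
    have := Set.ncard_add_ncard_compl
      {j : Fin (n+1) | ∃ i' ∈ dset X Y n σ, (i' : ℕ) + 1 = (j : ℕ)}
      (Set.toFinite _) (Set.toFinite _)
    rw [ncard_gapset] at this
    simp only [Nat.card_eq_fintype_card, Fintype.card_fin] at this
    omega
  · -- neither : empty set
    have hs : {j : Fin (n+1) | desCount X Y (n+1) (ins n j σ) = k} = ∅ := by
      ext j
      simp only [Set.mem_setOf_eq, Set.mem_empty_iff_false, iff_false]
      rw [desCount_ins X Y n hX j σ]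
      split_ifs with hg
      · intro he
        have hd1 : 1 ≤ desCount X Y n σ := by
          obtain ⟨i', hi', -⟩ := hg
          exact hpos ⟨i', hi', trivial⟩
        omega
      · exact h2
    rw [hs, Set.ncard_empty]

lemma ins_injective (n : ℕ) :
    Function.Injective (fun p : Fin (n+1) × Equiv.Perm (Fin n) => ins n p.1 p.2) := by
  rintro ⟨j, σ⟩ ⟨j', σ'⟩ he
  simp only at he
  have hj : j = j' := by
    by_contra hne
    obtain ⟨i'', hi⟩ := Fin.exists_succAbove_eq (show j' ≠ j from fun hh => hne hh.symm)
    have h3 := ins_apply_succAbove n j σ i''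
    rw [hi, he, ins_apply_self] at h3
    exact absurd h3.symm (Fin.castSucc_lt_last _).ne
  subst hj
  have hσ : σ = σ' := by
    apply Equiv.ext
    intro i
    have h3 := ins_apply_succAbove n j σ i
    rw [he, ins_apply_succAbove] at h3
    exact (Fin.castSucc_injective n h3.symm)
  rw [hσ]


def prodSubtypeSigma {α β : Type*} (P : α → β → Prop) :
    {p : α × β // P p.1 p.2} ≃ (b : β) × {a : α // P a b} where
  toFun x := ⟨x.1.2, x.1.1, x.2⟩
  invFun y := ⟨(y.2.1, y.1), y.2.2⟩
  left_inv x := rfl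
  right_inv y := rfl

set_option maxHeartbeats 1000000 in
/-- Recurrence for `D_{n,k}^{X,Y}` when `n+1 ∉ X`:
`D_{n+1,k} = (k+1) D_{n,k+1} + (n+1-k) D_{n,k}`. -/
theorem D_rec_not_mem (X Y : Set ℕ) (hX : 0 ∉ X) (hY : 0 ∉ Y) (n : ℕ) (hn : 1 ≤ n)
    (h : n + 1 ∉ X) (k : ℕ) :
    (D X Y (n + 1) k : ℤ) =
      ((k : ℤ) + 1) * (D X Y n (k + 1) : ℤ) +
        ((n : ℤ) + 1 - (k : ℤ)) * (D X Y n k : ℤ) := by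
  classical
  have hcard : Fintype.card (Fin (n+1) × Equiv.Perm (Fin n)) =
      Fintype.card (Equiv.Perm (Fin (n+1))) := by
    simp [Fintype.card_perm, Fintype.card_fin, Nat.factorial_succ]
  have hbij : Function.Bijective (fun p : Fin (n+1) × Equiv.Perm (Fin n) => ins n p.1 p.2) :=
    (Fintype.bijective_iff_injective_and_card _).mpr ⟨ins_injective n, hcard⟩
  have e1 : D X Y (n+1) k = Nat.card {p : Fin (n+1) × Equiv.Perm (Fin n) //
      desCount X Y (n+1) (ins n p.1 p.2) = k} := by
    rw [D]
    exact (Nat.card_congr (Equiv.subtypeEquiv (Equiv.ofBijective _ hbij)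
      (fun p => Iff.rfl))).symm
  have e2 : Nat.card {p : Fin (n+1) × Equiv.Perm (Fin n) //
        desCount X Y (n+1) (ins n p.1 p.2) = k} =
      ∑ σ : Equiv.Perm (Fin n),
        {j : Fin (n+1) | desCount X Y (n+1) (ins n j σ) = k}.ncard := by
    have steps : {p : Fin (n+1) × Equiv.Perm (Fin n) //
          desCount X Y (n+1) (ins n p.1 p.2) = k} ≃
        (σ : Equiv.Perm (Fin n)) × {j : Fin (n+1) //
          desCount X Y (n+1) (ins n j σ) = k} :=
      prodSubtypeSigma (fun (j : Fin (n+1)) (σ : Equiv.Perm (Fin n)) =>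
        desCount X Y (n+1) (ins n j σ) = k)
    have s1 : Nat.card {p : Fin (n+1) × Equiv.Perm (Fin n) //
          desCount X Y (n+1) (ins n p.1 p.2) = k} =
        Nat.card ((σ : Equiv.Perm (Fin n)) × {j : Fin (n+1) //
          desCount X Y (n+1) (ins n j σ) = k}) := Nat.card_congr steps
    have s2 : Nat.card ((σ : Equiv.Perm (Fin n)) × {j : Fin (n+1) //
          desCount X Y (n+1) (ins n j σ) = k}) =
        ∑ σ : Equiv.Perm (Fin n), Nat.card {j : Fin (n+1) //
          desCount X Y (n+1) (ins n j σ) = k} := by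
      rw [Nat.card_eq_fintype_card, Fintype.card_sigma]
      exact Finset.sum_congr rfl fun σ _ => Nat.card_eq_fintype_card.symm
    rw [s1, s2]
    exact Finset.sum_congr rfl fun σ _ => Nat.card_coe_set_eq _
  have e3 : (D X Y (n+1) k : ℤ) =
      ∑ σ : Equiv.Perm (Fin n),
        (((if desCount X Y n σ = k + 1 then (k : ℤ) + 1 else 0) +
          (if desCount X Y n σ = k then (n : ℤ) + 1 - (k : ℤ) else 0))) := by
    rw [e1, e2, Nat.cast_sum]
    refine Finset.sum_congr rfl fun σ _ => ?_
    rw [card_Q X Y n h σ k]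
    have hk := desCount_le X Y n σ
    split_ifs <;> omega
  rw [e3, Finset.sum_add_distrib]
  have f1 : ∑ σ : Equiv.Perm (Fin n),
      (if desCount X Y n σ = k + 1 then (k : ℤ) + 1 else 0) =
      ((k : ℤ) + 1) * (D X Y n (k + 1) : ℤ) := by
    rw [← Finset.sum_filter, Finset.sum_const, nsmul_eq_mul]
    have : (Finset.univ.filter fun σ : Equiv.Perm (Fin n) =>
        desCount X Y n σ = k + 1).card = D X Y n (k + 1) := by
      rw [D, Nat.card_eq_fintype_card, Fintype.card_subtype]
      simp only [Set.mem_setOf_eq]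
    rw [this]; ring
  have f2 : ∑ σ : Equiv.Perm (Fin n),
      (if desCount X Y n σ = k then (n : ℤ) + 1 - (k : ℤ) else 0) =
      ((n : ℤ) + 1 - (k : ℤ)) * (D X Y n k : ℤ) := by
    rw [← Finset.sum_filter, Finset.sum_const, nsmul_eq_mul]
    have : (Finset.univ.filter fun σ : Equiv.Perm (Fin n) =>
        desCount X Y n σ = k).card = D X Y n k := by
      rw [D, Nat.card_eq_fintype_card, Fintype.card_subtype]
      simp only [Set.mem_setOf_eq]
    rw [this]; ring
  rw [f1, f2]
end
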